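/- arXiv:1306.0922 — 3 statements merged into one kernel-verified Lean document; each statement's English description precedes it below -/
import Mathlib

section
/- Let A, B ∈ M_{p×p}(ℝ) and let f : ℝ → ℂ^p be Z-almost automorphic. Let x : ℝ → ℂ^p be a bounded solution of the differential equation with piecewise constant argument x'(t) = A x(t) + B x(⌊t⌋) + f(t), i.e. a bounded continuous function satisfying x(t) = x(s) + ∫_s^t (A x(u) + B x(⌊u⌋) + f(u)) du for all s ≤ t. Then x is almost automorphic (in Bochner's sense) if and only if the sequence n ↦ x(n), n ∈ ℤ, is discrete almost automorphic. -/
open MeasureTheory Filter Topology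

/-- Bounded, piecewise continuous: continuous on ℝ ∖ ℤ with finite one-sided
limits at every integer. -/
def BddPC (p : ℕ) (f : ℝ → Fin p → ℂ) : Prop :=
  (∃ C : ℝ, ∀ t : ℝ, ‖f t‖ ≤ C) ∧
  ContinuousOn f {t : ℝ | ∀ n : ℤ, t ≠ (n : ℝ)} ∧
  ∀ n : ℤ, (∃ L : Fin p → ℂ, Tendsto f (𝓝[<] (n : ℝ)) (𝓝 L)) ∧
           (∃ R : Fin p → ℂ, Tendsto f (𝓝[>] (n : ℝ)) (𝓝 R))

/-- `ℤ`-almost automorphic functions. -/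
def ZAlmostAutomorphic (p : ℕ) (f : ℝ → Fin p → ℂ) : Prop :=
  BddPC p f ∧
  ∀ s : ℕ → ℤ, ∃ (φ : ℕ → ℕ) (g : ℝ → Fin p → ℂ), StrictMono φ ∧
    (∀ t : ℝ, Tendsto (fun n => f (t + (s (φ n) : ℝ))) atTop (𝓝 (g t))) ∧
    (∀ t : ℝ, Tendsto (fun n => g (t - (s (φ n) : ℝ))) atTop (𝓝 (f t)))

/-- Almost automorphic functions in the sense of Bochner. -/
def AlmostAutomorphic (p : ℕ) (f : ℝ → Fin p → ℂ) : Prop :=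
  (∃ C : ℝ, ∀ t : ℝ, ‖f t‖ ≤ C) ∧ Continuous f ∧
  ∀ s : ℕ → ℝ, ∃ (φ : ℕ → ℕ) (g : ℝ → Fin p → ℂ), StrictMono φ ∧
    (∀ t : ℝ, Tendsto (fun n => f (t + s (φ n))) atTop (𝓝 (g t))) ∧
    (∀ t : ℝ, Tendsto (fun n => g (t - s (φ n))) atTop (𝓝 (f t)))

/-- Multiplication of a complex vector by a real matrix. -/
noncomputable def RMulVec {p : ℕ} (A : Matrix (Fin p) (Fin p) ℝ) (x : Fin p → ℂ) :
    Fin p → ℂ :=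
  fun i => ∑ j, ((A i j : ℝ) : ℂ) * x j

/-- A (continuous) solution of the DEPCA `x'(t) = A x(t) + B x(⌊t⌋) + f(t)`, in the
integrated sense. -/
def IsDEPCASolution {p : ℕ} (A B : Matrix (Fin p) (Fin p) ℝ) (f : ℝ → Fin p → ℂ)
    (x : ℝ → Fin p → ℂ) : Prop :=
  Continuous x ∧
  ∀ s t : ℝ, s ≤ t →
    x t = x s + ∫ u in s..t, (RMulVec A (x u) + RMulVec B (x ((⌊u⌋ : ℤ) : ℝ)) + f u)

/-- Discrete almost automorphic sequences `ℤ → ℂ^p`. -/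
def DiscreteAA (p : ℕ) (f : ℤ → Fin p → ℂ) : Prop :=
  ∀ s : ℕ → ℤ, ∃ (φ : ℕ → ℕ) (g : ℤ → Fin p → ℂ), StrictMono φ ∧
    (∀ k : ℤ, Tendsto (fun n => f (k + s (φ n))) atTop (𝓝 (g k))) ∧
    (∀ k : ℤ, Tendsto (fun n => g (k - s (φ n))) atTop (𝓝 (f k)))

section Helpers

variable {E : Type*} [NormedAddCommGroup E] [NormedSpace ℝ E]

/-- Integral form of Gronwall's inequality. -/
lemma gronwall_integral {v : ℝ → ℝ} {a b c K : ℝ} (hab : a ≤ b) (hc : 0 ≤ c) (hK : 0 ≤ K)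
    (hv : Continuous v) (hv0 : ∀ τ, 0 ≤ v τ)
    (h : ∀ τ ∈ Set.Icc a b, v τ ≤ c + K * ∫ u in a..τ, v u) :
    v b ≤ c * Real.exp (K * (b - a)) := by
  set w : ℝ → ℝ := fun τ => c + K * ∫ u in a..τ, v u with hw
  have hwd : ∀ τ : ℝ, HasDerivAt w (K * v τ) τ := by
    intro τ
    have h1 : HasDerivAt (fun τ => ∫ u in a..τ, v u) (v τ) τ :=
      intervalIntegral.integral_hasDerivAt_right (hv.intervalIntegrable _ _)
        (hv.stronglyMeasurableAtFilter _ _) hv.continuousAt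
    exact (h1.const_mul K).const_add c
  have hvw : ∀ τ ∈ Set.Icc a b, v τ ≤ w τ := h
  have hw0 : ∀ τ ∈ Set.Icc a b, 0 ≤ w τ := by
    intro τ hτ
    have h2 : 0 ≤ ∫ u in a..τ, v u :=
      intervalIntegral.integral_nonneg hτ.1 (fun u _ => hv0 u)
    have := mul_nonneg hK h2
    simp only [hw]; linarith
  have key := norm_le_gronwallBound_of_norm_deriv_right_le (f := w)
      (f' := fun τ => K * v τ) (δ := c) (K := K) (ε := 0) (a := a) (b := b)
      (Continuous.continuousOn (by
        have : Continuous w := by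
          rw [continuous_iff_continuousAt]
          exact fun τ => (hwd τ).continuousAt
        exact this))
      (fun τ _ => (hwd τ).hasDerivWithinAt)
      (by simp [hw, Real.norm_eq_abs, abs_of_nonneg hc])
      ?_
  · have hb' := key b ⟨hab, le_refl b⟩
    rw [gronwallBound_ε0] at hb'
    calc v b ≤ w b := hvw b ⟨hab, le_refl b⟩
    _ ≤ ‖w b‖ := le_abs_self _
    _ ≤ c * Real.exp (K * (b - a)) := hb'
  · intro τ hτ
    have hτ' : τ ∈ Set.Icc a b := ⟨hτ.1, le_of_lt hτ.2⟩
    have h1 : v τ ≤ w τ := hvw τ hτ'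
    have h2 : 0 ≤ w τ := hw0 τ hτ'
    rw [Real.norm_eq_abs, Real.norm_eq_abs, abs_of_nonneg h2,
      abs_of_nonneg (mul_nonneg hK (hv0 τ))]
    have := mul_le_mul_of_nonneg_left h1 hK
    linarith

omit [NormedSpace ℝ E] in
lemma intervalIntegrable_of_bounded {F : ℝ → E} {C : ℝ}
    (hm : AEStronglyMeasurable F (volume : Measure ℝ)) (hb : ∀ u, ‖F u‖ ≤ C) (a b : ℝ) :
    IntervalIntegrable F volume a b := by
  rw [intervalIntegrable_iff]
  exact Measure.integrableOn_of_bounded measure_Ioc_lt_top.ne hm (ae_of_all _ hb)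

lemma eventually_floor_eq {u : ℝ} (hu : ∀ k : ℤ, u ≠ (k : ℝ)) {δ : ℕ → ℝ}
    (hδ : Tendsto δ atTop (𝓝 0)) : ∀ᶠ n in atTop, ⌊u + δ n⌋ = ⌊u⌋ := by
  have h1 : (⌊u⌋ : ℝ) < u := lt_of_le_of_ne (Int.floor_le u) (Ne.symm (hu ⌊u⌋))
  have h2 : u < ⌊u⌋ + 1 := Int.lt_floor_add_one u
  have hε : (0:ℝ) < min (u - ⌊u⌋) ((⌊u⌋:ℝ) + 1 - u) := by
    apply lt_min <;> linarith
  filter_upwards [Metric.tendsto_nhds.mp hδ _ hε] with n hn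
  rw [Real.dist_eq, sub_zero] at hn
  have h5 : |δ n| < u - ⌊u⌋ := lt_of_lt_of_le hn (min_le_left _ _)
  have h6 : |δ n| < (⌊u⌋:ℝ) + 1 - u := lt_of_lt_of_le hn (min_le_right _ _)
  have h7 : -δ n ≤ |δ n| := neg_le_abs _
  have h8 : δ n ≤ |δ n| := le_abs_self _
  exact Int.floor_eq_iff.mpr ⟨by linarith, by linarith⟩

lemma aesm_of_cont_off_int {p : ℕ} {f : ℝ → Fin p → ℂ}
    (hf : ContinuousOn f {t : ℝ | ∀ n : ℤ, t ≠ (n : ℝ)}) :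
    AEStronglyMeasurable f (volume : Measure ℝ) := by
  set S : Set ℝ := {t : ℝ | ∀ n : ℤ, t ≠ (n : ℝ)} with hS
  have hScompl : Sᶜ = Set.range (fun n : ℤ => (n : ℝ)) := by
    ext t
    simp [hS, Set.mem_compl_iff, eq_comm]
  have hcount : (Sᶜ).Countable := by rw [hScompl]; exact Set.countable_range _
  have hmeas : MeasurableSet S := by
    rw [← compl_compl S]; exact hcount.measurableSet.compl
  have hnull : (volume : Measure ℝ) Sᶜ = 0 := hcount.measure_zero _
  have h1 : AEStronglyMeasurable f ((volume : Measure ℝ).restrict S) :=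
    hf.aestronglyMeasurable hmeas
  have h2 : (volume : Measure ℝ).restrict S = volume :=
    Measure.restrict_eq_self_of_ae_mem (by
      rw [MeasureTheory.ae_iff]
      exact hnull)
  rwa [h2] at h1

lemma ae_add_not_int (r : ℝ) : ∀ᵐ u : ℝ, ∀ k : ℤ, u + r ≠ (k : ℝ) := by
  rw [MeasureTheory.ae_iff]
  refine measure_mono_null (fun u hu => ?_)
    ((Set.countable_range (fun k : ℤ => (k : ℝ) - r)).measure_zero _)
  simp only [Set.mem_setOf_eq] at hu
  push_neg at hu
  obtain ⟨k, hk⟩ := hu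
  exact Set.mem_range.mpr ⟨k, by linarith⟩

lemma ae_not_int : ∀ᵐ u : ℝ, ∀ k : ℤ, u ≠ (k : ℝ) := by
  simpa using ae_add_not_int 0

/-- The continuous linear map given by `RMulVec`. -/
noncomputable def LMap {p : ℕ} (A : Matrix (Fin p) (Fin p) ℝ) :
    (Fin p → ℂ) →L[ℂ] (Fin p → ℂ) :=
  LinearMap.toContinuousLinearMap (Matrix.mulVecLin (A.map ((↑) : ℝ → ℂ)))

lemma LMap_apply {p : ℕ} (A : Matrix (Fin p) (Fin p) ℝ) (v : Fin p → ℂ) :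
    LMap A v = RMulVec A v := by
  funext i
  simp [LMap, Matrix.mulVecLin, Matrix.mulVec, dotProduct, RMulVec, Matrix.map]

lemma RMulVec_norm_le {p : ℕ} (A : Matrix (Fin p) (Fin p) ℝ) (v : Fin p → ℂ) :
    ‖RMulVec A v‖ ≤ ‖LMap A‖ * ‖v‖ := by
  rw [← LMap_apply]; exact (LMap A).le_opNorm v

lemma RMulVec_continuous {p : ℕ} (A : Matrix (Fin p) (Fin p) ℝ) :
    Continuous (RMulVec A (p := p)) := by
  have : RMulVec A (p := p) = fun v => LMap A v := by
    funext v; rw [LMap_apply]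
  rw [this]
  exact (LMap A).continuous

lemma RMulVec_sub {p : ℕ} (A : Matrix (Fin p) (Fin p) ℝ) (v w : Fin p → ℂ) :
    RMulVec A v - RMulVec A w = RMulVec A (v - w) := by
  rw [← LMap_apply, ← LMap_apply, ← LMap_apply, ← map_sub]

lemma cauchySeq_of_bound {E F : Type*} [NormedAddCommGroup E] [NormedAddCommGroup F]
    {β : ℕ → E} {α : ℕ → F} {ε : ℕ → ℝ} {D : ℝ} (hD : 0 < D)
    (hα : CauchySeq α) (hε : Tendsto ε atTop (𝓝 0))
    (hbd : ∀ n m, ‖β n - β m‖ ≤ (‖α n - α m‖ + ε n + ε m) * D) : CauchySeq β := by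
  rw [Metric.cauchySeq_iff]
  intro δ hδ
  obtain ⟨N₁, hN₁⟩ := Metric.cauchySeq_iff.mp hα (δ / (4 * D)) (by positivity)
  obtain ⟨N₂, hN₂⟩ := Metric.tendsto_atTop.mp hε (δ / (4 * D)) (by positivity)
  refine ⟨max N₁ N₂, fun n hn m hm => ?_⟩
  have h1 := hN₁ n (le_trans (le_max_left _ _) hn) m (le_trans (le_max_left _ _) hm)
  have h2 := hN₂ n (le_trans (le_max_right _ _) hn)
  have h3 := hN₂ m (le_trans (le_max_right _ _) hm)
  rw [Real.dist_eq, sub_zero] at h2 h3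
  rw [dist_eq_norm] at h1 ⊢
  have h4 : ε n ≤ |ε n| := le_abs_self _
  have h5 : ε m ≤ |ε m| := le_abs_self _
  have h6 := hbd n m
  have h7 : (‖α n - α m‖ + ε n + ε m) * D < (δ / (4 * D) + δ / (4 * D) + δ / (4 * D)) * D := by
    apply mul_lt_mul_of_pos_right _ hD
    linarith
  have h8 : (δ / (4 * D) + δ / (4 * D) + δ / (4 * D)) * D = 3 / 4 * δ := by
    field_simp; ring
  calc ‖β n - β m‖ ≤ (‖α n - α m‖ + ε n + ε m) * D := h6
  _ < (δ / (4 * D) + δ / (4 * D) + δ / (4 * D)) * D := h7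
  _ = 3 / 4 * δ := h8
  _ < δ := by linarith

lemma tendsto_of_norm_sub_le {E : Type*} [NormedAddCommGroup E] {u v : ℕ → E} {L : E}
    {b : ℕ → ℝ} (hv : Tendsto v atTop (𝓝 L)) (hb : Tendsto b atTop (𝓝 0))
    (hub : ∀ n, ‖u n - v n‖ ≤ b n) : Tendsto u atTop (𝓝 L) := by
  have h1 : Tendsto (fun n => u n - v n) atTop (𝓝 0) := squeeze_zero_norm hub hb
  have := h1.add hv
  simpa using this

end Helpers

set_option maxHeartbeats 2000000 in
/-- Core convergence lemma. -/
lemma depca_core {p : ℕ} (A B : Matrix (Fin p) (Fin p) ℝ) (f x : ℝ → Fin p → ℂ)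
    (C Cf : ℝ) (hC : ∀ t, ‖x t‖ ≤ C) (hCf : ∀ t, ‖f t‖ ≤ Cf)
    (hfm : AEStronglyMeasurable f (volume : Measure ℝ))
    (hxc : Continuous x)
    (hxe : ∀ a b : ℝ, a ≤ b → x b = x a +
      ∫ u in a..b, (RMulVec A (x u) + RMulVec B (x ((⌊u⌋ : ℤ) : ℝ)) + f u))
    (s : ℕ → ℝ) (m : ℕ → ℤ) (rr : ℕ → ℝ) (r : ℝ)
    (hsdef : ∀ n, s n = (m n : ℝ) + rr n)
    (hr : Tendsto rr atTop (𝓝 r))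
    (gd : ℤ → Fin p → ℂ) (h : ℝ → Fin p → ℂ)
    (hgd1 : ∀ k : ℤ, Tendsto (fun n => x (((k + m n : ℤ) : ℤ) : ℝ)) atTop (𝓝 (gd k)))
    (hgd2 : ∀ k : ℤ, Tendsto (fun n => gd (k - m n)) atTop (𝓝 (x ((k : ℤ) : ℝ))))
    (hh1 : ∀ t : ℝ, Tendsto (fun n => f (t + ((m n : ℤ) : ℝ))) atTop (𝓝 (h t)))
    (hh2 : ∀ t : ℝ, Tendsto (fun n => h (t - ((m n : ℤ) : ℝ))) atTop (𝓝 (f t))) :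
    ∃ g : ℝ → Fin p → ℂ,
      (∀ t : ℝ, Tendsto (fun n => x (t + s n)) atTop (𝓝 (g t))) ∧
      (∀ t : ℝ, Tendsto (fun n => g (t - s n)) atTop (𝓝 (x t))) := by
  classical
  have hC0 : 0 ≤ C := le_trans (norm_nonneg _) (hC 0)
  have hCf0 : 0 ≤ Cf := le_trans (norm_nonneg _) (hCf 0)
  set KA : ℝ := ‖LMap (p := p) A‖ with hKA
  set KB : ℝ := ‖LMap (p := p) B‖ with hKB
  have hKA0 : 0 ≤ KA := norm_nonneg _
  have hKB0 : 0 ≤ KB := norm_nonneg _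
  set M : ℝ := KA * C + KB * C + Cf with hM
  have hM0 : 0 ≤ M := by positivity
  set F : ℝ → Fin p → ℂ :=
    fun u => RMulVec A (x u) + RMulVec B (x ((⌊u⌋ : ℤ) : ℝ)) + f u with hF
  have hxe' : ∀ a b : ℝ, a ≤ b → x b = x a + ∫ u in a..b, F u := hxe
  have hnA : ∀ v : Fin p → ℂ, ‖RMulVec A v‖ ≤ KA * ‖v‖ := fun v => RMulVec_norm_le A v
  have hnB : ∀ v : Fin p → ℂ, ‖RMulVec B v‖ ≤ KB * ‖v‖ := fun v => RMulVec_norm_le B v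
  have hFb : ∀ u, ‖F u‖ ≤ M := by
    intro u
    have h1 : ‖RMulVec A (x u)‖ ≤ KA * C :=
      le_trans (hnA (x u)) (mul_le_mul_of_nonneg_left (hC u) hKA0)
    have h2 : ‖RMulVec B (x ((⌊u⌋ : ℤ) : ℝ))‖ ≤ KB * C :=
      le_trans (hnB (x ((⌊u⌋ : ℤ) : ℝ))) (mul_le_mul_of_nonneg_left (hC _) hKB0)
    have h3 : ‖f u‖ ≤ Cf := hCf u
    calc ‖F u‖ = ‖RMulVec A (x u) + RMulVec B (x ((⌊u⌋ : ℤ) : ℝ)) + f u‖ := by rw [hF]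
    _ ≤ ‖RMulVec A (x u) + RMulVec B (x ((⌊u⌋ : ℤ) : ℝ))‖ + ‖f u‖ := norm_add_le _ _
    _ ≤ (‖RMulVec A (x u)‖ + ‖RMulVec B (x ((⌊u⌋ : ℤ) : ℝ))‖) + ‖f u‖ := by
        gcongr
        exact norm_add_le _ _
    _ ≤ KA * C + KB * C + Cf := by linarith
    _ = M := hM.symm
  -- measurability basics
  have hmcast : Measurable (fun k : ℤ => (k : ℝ)) := measurable_from_top
  have hmgd : Measurable gd := measurable_from_top
  have hfloorm : Measurable (fun u : ℝ => ((⌊u⌋ : ℤ) : ℝ)) :=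
    hmcast.comp Int.measurable_floor
  have hmxfloor : ∀ (c : ℝ) (mm : ℤ),
      Measurable (fun u : ℝ => x (((⌊u + c⌋ + mm : ℤ)) : ℝ)) := by
    intro c mm
    exact hxc.measurable.comp (hmcast.comp
      ((Int.measurable_floor.comp (measurable_id.add_const c)).add_const mm))
  have hmgdfloor : ∀ (c : ℝ) (mm : ℤ),
      Measurable (fun u : ℝ => gd (⌊u + c⌋ - mm)) := by
    intro c mm
    exact hmgd.comp ((Int.measurable_floor.comp (measurable_id.add_const c)).sub_const mm)
  have htrans : ∀ (G : ℝ → Fin p → ℂ), AEStronglyMeasurable G (volume : Measure ℝ) →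
      ∀ c : ℝ, AEStronglyMeasurable (fun u => G (u + c)) (volume : Measure ℝ) := by
    intro G hG c
    exact hG.comp_measurePreserving (measurePreserving_add_right volume c)
  have hhm : AEStronglyMeasurable h (volume : Measure ℝ) := by
    refine aestronglyMeasurable_of_tendsto_ae atTop (fun n => htrans f hfm ((m n : ℤ) : ℝ)) ?_
    exact Eventually.of_forall hh1
  have hhb : ∀ t, ‖h t‖ ≤ Cf :=
    fun t => le_of_tendsto (hh1 t).norm (Eventually.of_forall fun n => hCf _)
  have hgdb : ∀ k, ‖gd k‖ ≤ C :=
    fun k => le_of_tendsto (hgd1 k).norm (Eventually.of_forall fun n => hC _)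
  -- interval integrability
  have hiA : ∀ (w : ℝ → Fin p → ℂ), Continuous w → ∀ a b : ℝ,
      IntervalIntegrable (fun u => RMulVec A (w u)) volume a b :=
    fun w hw a b => ((RMulVec_continuous A).comp hw).intervalIntegrable a b
  have hiBx : ∀ (c : ℝ) (mm : ℤ) (a b : ℝ),
      IntervalIntegrable (fun u => RMulVec B (x (((⌊u + c⌋ + mm : ℤ)) : ℝ))) volume a b := by
    intro c mm a b
    refine intervalIntegrable_of_bounded (C := KB * C)
      (((RMulVec_continuous B).measurable.comp (hmxfloor c mm)).aestronglyMeasurable) ?_ a b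
    intro u
    exact le_trans (hnB _) (mul_le_mul_of_nonneg_left (hC _) hKB0)
  have hiBgd : ∀ (c : ℝ) (mm : ℤ) (a b : ℝ),
      IntervalIntegrable (fun u => RMulVec B (gd (⌊u + c⌋ - mm))) volume a b := by
    intro c mm a b
    refine intervalIntegrable_of_bounded (C := KB * C)
      (((RMulVec_continuous B).measurable.comp (hmgdfloor c mm)).aestronglyMeasurable) ?_ a b
    intro u
    exact le_trans (hnB _) (mul_le_mul_of_nonneg_left (hgdb _) hKB0)
  have hif : ∀ (c a b : ℝ), IntervalIntegrable (fun u => f (u + c)) volume a b :=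
    fun c a b => intervalIntegrable_of_bounded (C := Cf) (htrans f hfm c) (fun u => hCf _) a b
  have hih : ∀ (c a b : ℝ), IntervalIntegrable (fun u => h (u + c)) volume a b :=
    fun c a b => intervalIntegrable_of_bounded (C := Cf) (htrans h hhm c) (fun u => hhb _) a b
  have hihs : ∀ (c a b : ℝ), IntervalIntegrable (fun u => h (u - c)) volume a b := by
    intro c a b
    have := hih (-c) a b
    simpa [sub_eq_add_neg] using this
  have hFi : ∀ a b : ℝ, IntervalIntegrable F volume a b := by
    intro a b
    refine intervalIntegrable_of_bounded (C := M) ?_ hFb a b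
    refine AEStronglyMeasurable.add (AEStronglyMeasurable.add ?_ ?_) hfm
    · exact ((RMulVec_continuous A).comp hxc).aestronglyMeasurable
    · exact ((RMulVec_continuous B).measurable.comp
        (hxc.measurable.comp hfloorm)).aestronglyMeasurable
  -- Lipschitz bound for x
  have hlip : ∀ a b : ℝ, ‖x b - x a‖ ≤ M * |b - a| := by
    have key : ∀ a b : ℝ, a ≤ b → ‖x b - x a‖ ≤ M * |b - a| := by
      intro a b hab
      have h1 := hxe' a b hab
      have h2 : x b - x a = ∫ u in a..b, F u := by rw [h1]; abel
      rw [h2]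
      exact intervalIntegral.norm_integral_le_of_norm_le_const (fun u _ => hFb u)
    intro a b
    rcases le_total a b with hab | hba
    · exact key a b hab
    · rw [norm_sub_rev, abs_sub_comm]
      exact key b a hba
  -- convergence of fractional parts
  have hδ : Tendsto (fun n => rr n - r) atTop (𝓝 0) := by
    simpa using hr.sub_const r
  have hδ' : Tendsto (fun n => r - rr n) atTop (𝓝 0) := by
    simpa using (tendsto_const_nhds (x := r)).sub hr
  -- shifted integral equation
  have hye : ∀ (c σ τ : ℝ), σ ≤ τ → x (τ + c) = x (σ + c) + ∫ u in σ..τ, F (u + c) := by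
    intro c σ τ hστ
    have h1 := hxe' (σ + c) (τ + c) (by linarith)
    rw [intervalIntegral.integral_comp_add_right]
    exact h1
  -- floor decomposition of the translated vector field
  have hsplitF : ∀ (n : ℕ) (u : ℝ), F (u + s n) =
      RMulVec A (x (u + s n)) +
        (RMulVec B (x (((⌊u + rr n⌋ + m n : ℤ)) : ℝ)) + f (u + s n)) := by
    intro n u
    have h1 : ⌊u + s n⌋ = ⌊u + rr n⌋ + m n := by
      rw [hsdef n, show u + ((m n : ℝ) + rr n) = (u + rr n) + (m n : ℝ) by ring,
        Int.floor_add_intCast]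
    rw [hF]
    simp only
    rw [h1, add_assoc]
  have hsplitF0 : ∀ u : ℝ, F u =
      RMulVec A (x u) + (RMulVec B (x ((⌊u⌋ : ℤ) : ℝ)) + f u) := by
    intro u; rw [hF]; simp only; rw [add_assoc]
  -- more measurability
  have hmgdr : Measurable (fun u : ℝ => gd ⌊u + r⌋) :=
    hmgd.comp (Int.measurable_floor.comp (measurable_id.add_const r))
  have hmxfloor0 : Measurable (fun u : ℝ => x ((⌊u⌋ : ℤ) : ℝ)) :=
    hxc.measurable.comp hfloorm
  have hiBgd0 : ∀ a b : ℝ, IntervalIntegrable (fun u => RMulVec B (gd ⌊u + r⌋)) volume a b := by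
    intro a b
    refine intervalIntegrable_of_bounded (C := KB * C)
      (((RMulVec_continuous B).measurable.comp hmgdr).aestronglyMeasurable) ?_ a b
    intro u
    exact le_trans (hnB _) (mul_le_mul_of_nonneg_left (hgdb _) hKB0)
  have hiBx0 : ∀ a b : ℝ, IntervalIntegrable (fun u => RMulVec B (x ((⌊u⌋ : ℤ) : ℝ))) volume a b := by
    intro a b
    refine intervalIntegrable_of_bounded (C := KB * C)
      (((RMulVec_continuous B).measurable.comp hmxfloor0).aestronglyMeasurable) ?_ a b
    intro u
    exact le_trans (hnB _) (mul_le_mul_of_nonneg_left (hC _) hKB0)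
  have hif0 : ∀ a b : ℝ, IntervalIntegrable f volume a b :=
    fun a b => intervalIntegrable_of_bounded (C := Cf) hfm hCf a b
  have hih0 : ∀ a b : ℝ, IntervalIntegrable h volume a b :=
    fun a b => intervalIntegrable_of_bounded (C := Cf) hhm hhb a b
  -- error functionals (forward)
  set E1 : ℝ → ℝ → ℕ → ℝ := fun σ t n =>
    ∫ u in σ..t, ‖RMulVec B (x (((⌊u + rr n⌋ + m n : ℤ)) : ℝ)) - RMulVec B (gd ⌊u + r⌋)‖
    with hE1
  set E2 : ℝ → ℝ → ℕ → ℝ := fun σ t n =>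
    ∫ v in (σ + r)..(t + r), ‖f (v + ((m n : ℤ) : ℝ)) - h v‖ with hE2
  set ε : ℝ → ℝ → ℕ → ℝ := fun σ t n => E1 σ t n + E2 σ t n + 2 * Cf * |rr n - r| with hEps
  have hE1meas : ∀ n : ℕ, AEStronglyMeasurable
      (fun u => ‖RMulVec B (x (((⌊u + rr n⌋ + m n : ℤ)) : ℝ)) - RMulVec B (gd ⌊u + r⌋)‖)
      (volume : Measure ℝ) := by
    intro n
    exact ((((RMulVec_continuous B).measurable.comp (hmxfloor (rr n) (m n))).sub
      ((RMulVec_continuous B).measurable.comp hmgdr)).norm).aestronglyMeasurable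
  have hE2meas : ∀ n : ℕ, AEStronglyMeasurable
      (fun v => ‖f (v + ((m n : ℤ) : ℝ)) - h v‖) (volume : Measure ℝ) := by
    intro n
    exact ((htrans f hfm ((m n : ℤ) : ℝ)).sub hhm).norm
  have hE1nn : ∀ (σ t : ℝ) (n : ℕ), σ ≤ t → 0 ≤ E1 σ t n := by
    intro σ t n hσt
    rw [hE1]
    exact intervalIntegral.integral_nonneg hσt (fun u _ => norm_nonneg _)
  have hE2nn : ∀ (σ t : ℝ) (n : ℕ), σ ≤ t → 0 ≤ E2 σ t n := by
    intro σ t n hσt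
    rw [hE2]
    exact intervalIntegral.integral_nonneg (by linarith) (fun u _ => norm_nonneg _)
  have hεnn : ∀ (σ t : ℝ) (n : ℕ), σ ≤ t → 0 ≤ ε σ t n := by
    intro σ t n hσt
    rw [hEps]
    have := hE1nn σ t n hσt
    have := hE2nn σ t n hσt
    have : (0:ℝ) ≤ 2 * Cf * |rr n - r| := by positivity
    simp only
    linarith [hE1nn σ t n hσt, hE2nn σ t n hσt]
  have hE1tend : ∀ (σ t : ℝ), Tendsto (fun n => E1 σ t n) atTop (𝓝 0) := by
    intro σ t
    have key := intervalIntegral.tendsto_integral_filter_of_dominated_convergence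
      (μ := (volume : Measure ℝ)) (a := σ) (b := t) (l := (atTop : Filter ℕ))
      (F := fun n u => ‖RMulVec B (x (((⌊u + rr n⌋ + m n : ℤ)) : ℝ)) - RMulVec B (gd ⌊u + r⌋)‖)
      (f := fun _ => (0:ℝ)) (bound := fun _ => KB * C + KB * C)
      (Eventually.of_forall (fun n => (hE1meas n).restrict))
      (Eventually.of_forall (fun n => ae_of_all _ (fun u _ => by
        rw [norm_norm]
        refine le_trans (norm_sub_le _ _) (add_le_add ?_ ?_)
        · exact le_trans (hnB _) (mul_le_mul_of_nonneg_left (hC _) hKB0)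
        · exact le_trans (hnB _) (mul_le_mul_of_nonneg_left (hgdb _) hKB0))))
      intervalIntegrable_const
      ?_
    · rw [intervalIntegral.integral_zero] at key
      exact key
    · filter_upwards [ae_add_not_int r] with u hu
      intro _
      have hfl : ∀ᶠ n in atTop, ⌊u + rr n⌋ = ⌊u + r⌋ := by
        filter_upwards [eventually_floor_eq hu hδ] with n hn
        rw [show u + rr n = u + r + (rr n - r) by ring]
        exact hn
      have hx1 : Tendsto (fun n => RMulVec B (x (((⌊u + r⌋ + m n : ℤ)) : ℝ))) atTop
          (𝓝 (RMulVec B (gd ⌊u + r⌋))) :=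
        ((RMulVec_continuous B).tendsto _).comp (hgd1 ⌊u + r⌋)
      have h0 : Tendsto (fun n => ‖RMulVec B (x (((⌊u + r⌋ + m n : ℤ)) : ℝ)) -
          RMulVec B (gd ⌊u + r⌋)‖) atTop (𝓝 0) := by
        have := (hx1.sub (tendsto_const_nhds (x := RMulVec B (gd ⌊u + r⌋)))).norm
        simpa using this
      refine Tendsto.congr' ?_ h0
      filter_upwards [hfl] with n hn
      rw [hn]
  have hE2tend : ∀ (σ t : ℝ), Tendsto (fun n => E2 σ t n) atTop (𝓝 0) := by
    intro σ t
    have key := intervalIntegral.tendsto_integral_filter_of_dominated_convergence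
      (μ := (volume : Measure ℝ)) (a := σ + r) (b := t + r) (l := (atTop : Filter ℕ))
      (F := fun n v => ‖f (v + ((m n : ℤ) : ℝ)) - h v‖)
      (f := fun _ => (0:ℝ)) (bound := fun _ => Cf + Cf)
      (Eventually.of_forall (fun n => (hE2meas n).restrict))
      (Eventually.of_forall (fun n => ae_of_all _ (fun v _ => by
        rw [norm_norm]
        exact le_trans (norm_sub_le _ _) (add_le_add (hCf _) (hhb _)))))
      intervalIntegrable_const
      (ae_of_all _ (fun v _ => by
        have := ((hh1 v).sub (tendsto_const_nhds (x := h v))).norm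
        simpa using this))
    rw [intervalIntegral.integral_zero] at key
    exact key
  have hεtend : ∀ (σ t : ℝ), Tendsto (fun n => ε σ t n) atTop (𝓝 0) := by
    intro σ t
    have h3 : Tendsto (fun n => 2 * Cf * |rr n - r|) atTop (𝓝 0) := by
      have := hδ.abs.const_mul (2 * Cf)
      simpa using this
    have := ((hE1tend σ t).add (hE2tend σ t)).add h3
    rw [hEps]
    simpa using this
  -- forward comparison bound
  have hC2 : ∀ (σ t : ℝ) (n : ℕ) (τ : ℝ), σ ≤ τ → τ ≤ t →
      ‖(∫ u in σ..τ, (RMulVec B (x (((⌊u + rr n⌋ + m n : ℤ)) : ℝ)) + f (u + s n))) -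
        ∫ u in σ..τ, (RMulVec B (gd ⌊u + r⌋) + h (u + r))‖ ≤ ε σ t n := by
    intro σ t n τ hστ hτt
    have hστt : σ ≤ t := le_trans hστ hτt
    have i1 := hiBx (rr n) (m n) σ τ
    have i2 := hif (s n) σ τ
    have i3 := hiBgd0 σ τ
    have i4 := hih r σ τ
    rw [intervalIntegral.integral_add i1 i2, intervalIntegral.integral_add i3 i4]
    have hrearr : ∀ a b c d : Fin p → ℂ, (a + b) - (c + d) = (a - c) + (b - d) := by
      intros; abel
    rw [hrearr]
    have hT1 : ‖(∫ u in σ..τ, RMulVec B (x (((⌊u + rr n⌋ + m n : ℤ)) : ℝ))) -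
        ∫ u in σ..τ, RMulVec B (gd ⌊u + r⌋)‖ ≤ E1 σ t n := by
      rw [← intervalIntegral.integral_sub i1 i3]
      refine le_trans (intervalIntegral.norm_integral_le_integral_norm hστ) ?_
      rw [hE1]
      simp only
      refine intervalIntegral.integral_mono_interval (le_refl σ) hστ hτt
        (ae_of_all _ (fun u => norm_nonneg _)) ?_
      exact ((hiBx (rr n) (m n) σ t).sub (hiBgd0 σ t)).norm
    have hT2 : ‖(∫ u in σ..τ, f (u + s n)) - ∫ u in σ..τ, h (u + r)‖ ≤
        E2 σ t n + 2 * Cf * |rr n - r| := by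
      have hcv1 : (∫ u in σ..τ, f (u + s n)) =
          ∫ v in (σ + rr n)..(τ + rr n), f (v + ((m n : ℤ) : ℝ)) := by
        have heq : ∀ u : ℝ, f (u + s n) = f ((u + rr n) + ((m n : ℤ) : ℝ)) := by
          intro u; rw [hsdef n]; ring_nf
        rw [intervalIntegral.integral_congr (g := fun u => f ((u + rr n) + ((m n : ℤ) : ℝ)))
          (fun u _ => heq u)]
        exact intervalIntegral.integral_comp_add_right (fun v => f (v + ((m n : ℤ) : ℝ))) (rr n)
      have hcv2 : (∫ u in σ..τ, h (u + r)) = ∫ v in (σ + r)..(τ + r), h v :=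
        intervalIntegral.integral_comp_add_right h r
      rw [hcv1, hcv2]
      have hdec : (∫ v in (σ + rr n)..(τ + rr n), f (v + ((m n : ℤ) : ℝ))) =
          ((∫ v in (σ + rr n)..(σ + r), f (v + ((m n : ℤ) : ℝ))) +
            ∫ v in (σ + r)..(τ + r), f (v + ((m n : ℤ) : ℝ))) +
            ∫ v in (τ + r)..(τ + rr n), f (v + ((m n : ℤ) : ℝ)) := by
        rw [intervalIntegral.integral_add_adjacent_intervals (hif _ _ _) (hif _ _ _),
          intervalIntegral.integral_add_adjacent_intervals (hif _ _ _) (hif _ _ _)]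
      rw [hdec]
      have hmid : ‖(∫ v in (σ + r)..(τ + r), f (v + ((m n : ℤ) : ℝ))) -
          ∫ v in (σ + r)..(τ + r), h v‖ ≤ E2 σ t n := by
        rw [← intervalIntegral.integral_sub (hif _ _ _) (hih0 _ _)]
        refine le_trans (intervalIntegral.norm_integral_le_integral_norm (by linarith)) ?_
        rw [hE2]
        simp only
        refine intervalIntegral.integral_mono_interval (le_refl (σ + r)) (by linarith)
          (by linarith) (ae_of_all _ (fun v => norm_nonneg _)) ?_
        exact ((hif _ _ _).sub (hih0 _ _)).norm
      have hedge1 : ‖∫ v in (σ + rr n)..(σ + r), f (v + ((m n : ℤ) : ℝ))‖ ≤ Cf * |rr n - r| := by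
        have hb := intervalIntegral.norm_integral_le_of_norm_le_const (C := Cf)
          (a := σ + rr n) (b := σ + r) (f := fun v => f (v + ((m n : ℤ) : ℝ)))
          (fun v _ => hCf _)
        have harg : (σ + r) - (σ + rr n) = -(rr n - r) := by ring
        rwa [harg, abs_neg] at hb
      have hedge2 : ‖∫ v in (τ + r)..(τ + rr n), f (v + ((m n : ℤ) : ℝ))‖ ≤ Cf * |rr n - r| := by
        have hb := intervalIntegral.norm_integral_le_of_norm_le_const (C := Cf)
          (a := τ + r) (b := τ + rr n) (f := fun v => f (v + ((m n : ℤ) : ℝ)))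
          (fun v _ => hCf _)
        have harg : (τ + rr n) - (τ + r) = rr n - r := by ring
        rwa [harg] at hb
      have hre : ∀ a b c d : Fin p → ℂ, ((a + b) + c) - d = (b - d) + (a + c) := by
        intros; abel
      rw [hre]
      refine le_trans (norm_add_le _ _) ?_
      have hac := norm_add_le (∫ v in (σ + rr n)..(σ + r), f (v + ((m n : ℤ) : ℝ)))
        (∫ v in (τ + r)..(τ + rr n), f (v + ((m n : ℤ) : ℝ)))
      linarith
    calc ‖((∫ u in σ..τ, RMulVec B (x (((⌊u + rr n⌋ + m n : ℤ)) : ℝ))) -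
          ∫ u in σ..τ, RMulVec B (gd ⌊u + r⌋)) +
          ((∫ u in σ..τ, f (u + s n)) - ∫ u in σ..τ, h (u + r))‖ ≤
        ‖(∫ u in σ..τ, RMulVec B (x (((⌊u + rr n⌋ + m n : ℤ)) : ℝ))) -
          ∫ u in σ..τ, RMulVec B (gd ⌊u + r⌋)‖ +
        ‖(∫ u in σ..τ, f (u + s n)) - ∫ u in σ..τ, h (u + r)‖ := norm_add_le _ _
    _ ≤ E1 σ t n + (E2 σ t n + 2 * Cf * |rr n - r|) := add_le_add hT1 hT2
    _ = ε σ t n := by rw [hEps]; ring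
  -- norm bound for the A-integral
  have hnormA : ∀ (w : ℝ → Fin p → ℂ), Continuous w → ∀ σ τ : ℝ, σ ≤ τ →
      ‖∫ u in σ..τ, RMulVec A (w u)‖ ≤ KA * ∫ u in σ..τ, ‖w u‖ := by
    intro w hw σ τ hστ
    refine le_trans (intervalIntegral.norm_integral_le_integral_norm hστ) ?_
    rw [← intervalIntegral.integral_const_mul]
    exact intervalIntegral.integral_mono_on hστ
      ((((RMulVec_continuous A).comp hw).norm).intervalIntegrable _ _)
      ((continuous_const.mul hw.norm).intervalIntegrable _ _) (fun u _ => hnA (w u))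
  -- the forward Gronwall estimate
  have hFwd : ∀ (t σ : ℝ), σ ≤ t → ∀ n nn : ℕ,
      ‖x (t + s n) - x (t + s nn)‖ ≤
        (‖x (σ + s n) - x (σ + s nn)‖ + ε σ t n + ε σ t nn) * Real.exp (KA * (t - σ)) := by
    intro t σ hσt n nn
    have hwc : Continuous (fun τ => x (τ + s n) - x (τ + s nn)) :=
      (hxc.comp (continuous_id.add continuous_const)).sub
        (hxc.comp (continuous_id.add continuous_const))
    have hkey : ∀ τ ∈ Set.Icc σ t, ‖x (τ + s n) - x (τ + s nn)‖ ≤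
        (‖x (σ + s n) - x (σ + s nn)‖ + ε σ t n + ε σ t nn) +
          KA * ∫ u in σ..τ, ‖x (u + s n) - x (u + s nn)‖ := by
      intro τ hτ
      have hστ : σ ≤ τ := hτ.1
      have hτt : τ ≤ t := hτ.2
      have eqn : ∀ nm : ℕ, x (τ + s nm) = x (σ + s nm) +
          ((∫ u in σ..τ, RMulVec A (x (u + s nm))) +
            ∫ u in σ..τ, (RMulVec B (x (((⌊u + rr nm⌋ + m nm : ℤ)) : ℝ)) + f (u + s nm))) := by
        intro nm
        have h1 := hye (s nm) σ τ hστ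
        have h2 : (∫ u in σ..τ, F (u + s nm)) =
            (∫ u in σ..τ, RMulVec A (x (u + s nm))) +
              ∫ u in σ..τ, (RMulVec B (x (((⌊u + rr nm⌋ + m nm : ℤ)) : ℝ)) + f (u + s nm)) := by
          rw [← intervalIntegral.integral_add
            (hiA (fun u => x (u + s nm)) (hxc.comp (continuous_id.add continuous_const)) σ τ)
            ((hiBx (rr nm) (m nm) σ τ).add (hif (s nm) σ τ))]
          exact intervalIntegral.integral_congr (fun u _ => hsplitF nm u)
        rw [h1, h2]
      have hAdiff : (∫ u in σ..τ, RMulVec A (x (u + s n))) -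
          (∫ u in σ..τ, RMulVec A (x (u + s nn))) =
          ∫ u in σ..τ, RMulVec A (x (u + s n) - x (u + s nn)) := by
        rw [← intervalIntegral.integral_sub
          (hiA (fun u => x (u + s n)) (hxc.comp (continuous_id.add continuous_const)) σ τ)
          (hiA (fun u => x (u + s nn)) (hxc.comp (continuous_id.add continuous_const)) σ τ)]
        exact intervalIntegral.integral_congr (fun u _ => RMulVec_sub A _ _)
      have hwrep : x (τ + s n) - x (τ + s nn) =
          (x (σ + s n) - x (σ + s nn)) +
            ((∫ u in σ..τ, RMulVec A (x (u + s n) - x (u + s nn))) +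
              (((∫ u in σ..τ, (RMulVec B (x (((⌊u + rr n⌋ + m n : ℤ)) : ℝ)) + f (u + s n))) -
                ∫ u in σ..τ, (RMulVec B (gd ⌊u + r⌋) + h (u + r))) -
               ((∫ u in σ..τ, (RMulVec B (x (((⌊u + rr nn⌋ + m nn : ℤ)) : ℝ)) + f (u + s nn))) -
                ∫ u in σ..τ, (RMulVec B (gd ⌊u + r⌋) + h (u + r))))) := by
        rw [eqn n, eqn nn, ← hAdiff]
        abel
      rw [hwrep]
      have hb1 := hnormA (fun u => x (u + s n) - x (u + s nn)) hwc σ τ hστ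
      have hb2 := hC2 σ t n τ hστ hτt
      have hb3 := hC2 σ t nn τ hστ hτt
      refine le_trans (norm_add_le _ _) ?_
      have hstep := norm_add_le (∫ u in σ..τ, RMulVec A (x (u + s n) - x (u + s nn)))
        ((((∫ u in σ..τ, (RMulVec B (x (((⌊u + rr n⌋ + m n : ℤ)) : ℝ)) + f (u + s n))) -
            ∫ u in σ..τ, (RMulVec B (gd ⌊u + r⌋) + h (u + r))) -
           ((∫ u in σ..τ, (RMulVec B (x (((⌊u + rr nn⌋ + m nn : ℤ)) : ℝ)) + f (u + s nn))) -
            ∫ u in σ..τ, (RMulVec B (gd ⌊u + r⌋) + h (u + r)))))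
      have hstep2 := norm_sub_le
        ((∫ u in σ..τ, (RMulVec B (x (((⌊u + rr n⌋ + m n : ℤ)) : ℝ)) + f (u + s n))) -
          ∫ u in σ..τ, (RMulVec B (gd ⌊u + r⌋) + h (u + r)))
        ((∫ u in σ..τ, (RMulVec B (x (((⌊u + rr nn⌋ + m nn : ℤ)) : ℝ)) + f (u + s nn))) -
          ∫ u in σ..τ, (RMulVec B (gd ⌊u + r⌋) + h (u + r)))
      linarith
    have hgron := gronwall_integral (a := σ) (b := t)
      (c := ‖x (σ + s n) - x (σ + s nn)‖ + ε σ t n + ε σ t nn) (K := KA) hσt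
      (by have := hεnn σ t n hσt; have := hεnn σ t nn hσt; positivity) hKA0
      hwc.norm (fun τ => norm_nonneg _) hkey
    exact hgron
  -- construction of the limit function g
  have hcauchy : ∀ t : ℝ, ∃ l, Tendsto (fun n => x (t + s n)) atTop (𝓝 l) := by
    intro t
    set k : ℤ := ⌊t + r⌋ with hk
    set σ : ℝ := (k : ℝ) - r with hσ
    have hσt : σ ≤ t := by
      rw [hσ]
      have := Int.floor_le (t + r)
      rw [← hk] at this
      linarith
    have hαdist : ∀ n, ‖x (σ + s n) - x (((k + m n : ℤ)) : ℝ)‖ ≤ M * |rr n - r| := by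
      intro n
      have h1 := hlip (((k + m n : ℤ)) : ℝ) (σ + s n)
      have h2 : σ + s n - (((k + m n : ℤ)) : ℝ) = rr n - r := by
        rw [hσ, hsdef n]; push_cast; ring
      rw [h2] at h1
      exact h1
    have hα : Tendsto (fun n => x (σ + s n)) atTop (𝓝 (gd k)) := by
      refine tendsto_of_norm_sub_le (hgd1 k) ?_ hαdist
      have := hδ.abs.const_mul M
      simpa using this
    have hcs : CauchySeq (fun n => x (t + s n)) := by
      refine cauchySeq_of_bound (D := Real.exp (KA * (t - σ))) (Real.exp_pos _)
        hα.cauchySeq (hεtend σ t) ?_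
      intro n nn
      exact hFwd t σ hσt n nn
    exact cauchySeq_tendsto_of_complete hcs
  choose g hg using hcauchy
  have hgb : ∀ t, ‖g t‖ ≤ C :=
    fun t => le_of_tendsto (hg t).norm (Eventually.of_forall fun n => hC _)
  have hglip : ∀ a b : ℝ, ‖g b - g a‖ ≤ M * |b - a| := by
    intro a b
    refine le_of_tendsto ((hg b).sub (hg a)).norm (Eventually.of_forall fun n => ?_)
    have h1 := hlip (a + s n) (b + s n)
    have harg : (b + s n) - (a + s n) = b - a := by ring
    rw [harg] at h1
    exact h1
  have hgc : Continuous g := by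
    have hL : LipschitzWith (Real.toNNReal M) g := by
      refine LipschitzWith.of_dist_le_mul (fun a b => ?_)
      rw [dist_eq_norm, Real.dist_eq, Real.coe_toNNReal M hM0]
      exact hglip b a
    exact hL.continuous
  have hgr : ∀ j : ℤ, g ((j : ℝ) - r) = gd j := by
    intro j
    refine tendsto_nhds_unique (hg ((j : ℝ) - r)) ?_
    refine tendsto_of_norm_sub_le (hgd1 j)
      (by have := hδ.abs.const_mul M; simpa using this) ?_
    intro n
    have h1 := hlip (((j + m n : ℤ)) : ℝ) (((j : ℝ) - r) + s n)
    have h2 : ((j : ℝ) - r) + s n - (((j + m n : ℤ)) : ℝ) = rr n - r := by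
      rw [hsdef n]; push_cast; ring
    rw [h2] at h1
    exact h1
  -- integral equation for g
  have hgeq : ∀ σ τ : ℝ, σ ≤ τ → g τ = g σ +
      ((∫ u in σ..τ, RMulVec A (g u)) +
        ∫ u in σ..τ, (RMulVec B (gd ⌊u + r⌋) + h (u + r))) := by
    intro σ τ hστ
    have hAx : Tendsto (fun n => ∫ u in σ..τ, RMulVec A (x (u + s n))) atTop
        (𝓝 (∫ u in σ..τ, RMulVec A (g u))) := by
      apply intervalIntegral.tendsto_integral_filter_of_dominated_convergence
        (l := (atTop : Filter ℕ)) (bound := fun _ => KA * C)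
      · exact Eventually.of_forall (fun n => (((RMulVec_continuous A).comp
          (hxc.comp (continuous_id.add continuous_const))).aestronglyMeasurable).restrict)
      · exact Eventually.of_forall (fun n => ae_of_all _ (fun u _ =>
          le_trans (hnA _) (mul_le_mul_of_nonneg_left (hC _) hKA0)))
      · exact intervalIntegrable_const
      · exact ae_of_all _ (fun u _ => ((RMulVec_continuous A).tendsto _).comp (hg u))
    have hP : Tendsto (fun n => ∫ u in σ..τ,
        (RMulVec B (x (((⌊u + rr n⌋ + m n : ℤ)) : ℝ)) + f (u + s n))) atTop
        (𝓝 (∫ u in σ..τ, (RMulVec B (gd ⌊u + r⌋) + h (u + r)))) :=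
      tendsto_of_norm_sub_le tendsto_const_nhds (hεtend σ τ)
        (fun n => hC2 σ τ n τ hστ (le_refl τ))
    have hrep : ∀ n : ℕ, x (τ + s n) = x (σ + s n) +
        ((∫ u in σ..τ, RMulVec A (x (u + s n))) +
          ∫ u in σ..τ, (RMulVec B (x (((⌊u + rr n⌋ + m n : ℤ)) : ℝ)) + f (u + s n))) := by
      intro n
      have h1 := hye (s n) σ τ hστ
      have h2 : (∫ u in σ..τ, F (u + s n)) =
          (∫ u in σ..τ, RMulVec A (x (u + s n))) +
            ∫ u in σ..τ, (RMulVec B (x (((⌊u + rr n⌋ + m n : ℤ)) : ℝ)) + f (u + s n)) := by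
        rw [← intervalIntegral.integral_add
          (hiA (fun u => x (u + s n)) (hxc.comp (continuous_id.add continuous_const)) σ τ)
          ((hiBx (rr n) (m n) σ τ).add (hif (s n) σ τ))]
        exact intervalIntegral.integral_congr (fun u _ => hsplitF n u)
      rw [h1, h2]
    refine tendsto_nhds_unique (hg τ) ?_
    have hsum := (hg σ).add (hAx.add hP)
    refine Tendsto.congr (fun n => (hrep n).symm) hsum
  -- backward error functionals
  set E1' : ℝ → ℝ → ℕ → ℝ := fun σ t n =>
    ∫ u in σ..t, ‖RMulVec B (gd (⌊u + (r - rr n)⌋ - m n)) - RMulVec B (x ((⌊u⌋ : ℤ) : ℝ))‖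
    with hE1'
  set E2' : ℝ → ℝ → ℕ → ℝ := fun σ t n =>
    ∫ w in σ..t, ‖h (w - ((m n : ℤ) : ℝ)) - f w‖ with hE2'
  set ε' : ℝ → ℝ → ℕ → ℝ := fun σ t n =>
    E1' σ t n + E2' σ t n + 2 * Cf * |r - rr n| with hEps'
  have htranssub : ∀ (G : ℝ → Fin p → ℂ), AEStronglyMeasurable G (volume : Measure ℝ) →
      ∀ c : ℝ, AEStronglyMeasurable (fun u => G (u - c)) (volume : Measure ℝ) := by
    intro G hG c
    have := htrans G hG (-c)
    simpa [sub_eq_add_neg] using this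
  have hE1'nn : ∀ (σ t : ℝ) (n : ℕ), σ ≤ t → 0 ≤ E1' σ t n := by
    intro σ t n hσt
    rw [hE1']
    exact intervalIntegral.integral_nonneg hσt (fun u _ => norm_nonneg _)
  have hE2'nn : ∀ (σ t : ℝ) (n : ℕ), σ ≤ t → 0 ≤ E2' σ t n := by
    intro σ t n hσt
    rw [hE2']
    exact intervalIntegral.integral_nonneg hσt (fun u _ => norm_nonneg _)
  have hε'nn : ∀ (σ t : ℝ) (n : ℕ), σ ≤ t → 0 ≤ ε' σ t n := by
    intro σ t n hσt
    rw [hEps']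
    have h3 : (0:ℝ) ≤ 2 * Cf * |r - rr n| := by positivity
    simp only
    linarith [hE1'nn σ t n hσt, hE2'nn σ t n hσt]
  have hE1'tend : ∀ (σ t : ℝ), Tendsto (fun n => E1' σ t n) atTop (𝓝 0) := by
    intro σ t
    have key := intervalIntegral.tendsto_integral_filter_of_dominated_convergence
      (μ := (volume : Measure ℝ)) (a := σ) (b := t) (l := (atTop : Filter ℕ))
      (F := fun n u => ‖RMulVec B (gd (⌊u + (r - rr n)⌋ - m n)) -
        RMulVec B (x ((⌊u⌋ : ℤ) : ℝ))‖)
      (f := fun _ => (0:ℝ)) (bound := fun _ => KB * C + KB * C)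
      (Eventually.of_forall (fun n => ((((RMulVec_continuous B).measurable.comp
        (hmgdfloor (r - rr n) (m n))).sub ((RMulVec_continuous B).measurable.comp
        hmxfloor0)).norm).aestronglyMeasurable.restrict))
      (Eventually.of_forall (fun n => ae_of_all _ (fun u _ => by
        rw [norm_norm]
        refine le_trans (norm_sub_le _ _) (add_le_add ?_ ?_)
        · exact le_trans (hnB _) (mul_le_mul_of_nonneg_left (hgdb _) hKB0)
        · exact le_trans (hnB _) (mul_le_mul_of_nonneg_left (hC _) hKB0))))
      intervalIntegrable_const
      ?_
    · rw [intervalIntegral.integral_zero] at key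
      exact key
    · filter_upwards [ae_not_int] with u hu
      intro _
      have hfl : ∀ᶠ n in atTop, ⌊u + (r - rr n)⌋ = ⌊u⌋ := eventually_floor_eq hu hδ'
      have hx1 : Tendsto (fun n => RMulVec B (gd (⌊u⌋ - m n))) atTop
          (𝓝 (RMulVec B (x ((⌊u⌋ : ℤ) : ℝ)))) :=
        ((RMulVec_continuous B).tendsto _).comp (hgd2 ⌊u⌋)
      have h0 : Tendsto (fun n => ‖RMulVec B (gd (⌊u⌋ - m n)) -
          RMulVec B (x ((⌊u⌋ : ℤ) : ℝ))‖) atTop (𝓝 0) := by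
        have := (hx1.sub (tendsto_const_nhds (x := RMulVec B (x ((⌊u⌋ : ℤ) : ℝ))))).norm
        simpa using this
      refine Tendsto.congr' ?_ h0
      filter_upwards [hfl] with n hn
      rw [hn]
  have hE2'tend : ∀ (σ t : ℝ), Tendsto (fun n => E2' σ t n) atTop (𝓝 0) := by
    intro σ t
    have key := intervalIntegral.tendsto_integral_filter_of_dominated_convergence
      (μ := (volume : Measure ℝ)) (a := σ) (b := t) (l := (atTop : Filter ℕ))
      (F := fun n w => ‖h (w - ((m n : ℤ) : ℝ)) - f w‖)
      (f := fun _ => (0:ℝ)) (bound := fun _ => Cf + Cf)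
      (Eventually.of_forall (fun n => ((htranssub h hhm ((m n : ℤ) : ℝ)).sub hfm).norm.restrict))
      (Eventually.of_forall (fun n => ae_of_all _ (fun w _ => by
        rw [norm_norm]
        exact le_trans (norm_sub_le _ _) (add_le_add (hhb _) (hCf _)))))
      intervalIntegrable_const
      (ae_of_all _ (fun w _ => by
        have := ((hh2 w).sub (tendsto_const_nhds (x := f w))).norm
        simpa using this))
    rw [intervalIntegral.integral_zero] at key
    exact key
  have hε'tend : ∀ (σ t : ℝ), Tendsto (fun n => ε' σ t n) atTop (𝓝 0) := by
    intro σ t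
    have h3 : Tendsto (fun n => 2 * Cf * |r - rr n|) atTop (𝓝 0) := by
      have := hδ'.abs.const_mul (2 * Cf)
      simpa using this
    have := ((hE1'tend σ t).add (hE2'tend σ t)).add h3
    rw [hEps']
    simpa using this
  -- backward comparison bound
  have hC2' : ∀ (σ t : ℝ) (n : ℕ) (τ : ℝ), σ ≤ τ → τ ≤ t →
      ‖(∫ u in σ..τ, (RMulVec B (gd (⌊u + (r - rr n)⌋ - m n)) +
          h ((u + (r - rr n)) - ((m n : ℤ) : ℝ)))) -
        ∫ u in σ..τ, (RMulVec B (x ((⌊u⌋ : ℤ) : ℝ)) + f u)‖ ≤ ε' σ t n := by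
    intro σ t n τ hστ hτt
    have hστt : σ ≤ t := le_trans hστ hτt
    have i1 := hiBgd (r - rr n) (m n) σ τ
    have i2 : IntervalIntegrable (fun u => h ((u + (r - rr n)) - ((m n : ℤ) : ℝ)))
        volume σ τ := by
      have hthis := hih ((r - rr n) - ((m n : ℤ) : ℝ)) σ τ
      have heq : (fun u : ℝ => h (u + ((r - rr n) - ((m n : ℤ) : ℝ)))) =
          fun u : ℝ => h ((u + (r - rr n)) - ((m n : ℤ) : ℝ)) := by
        funext u; congr 1; ring
      rwa [heq] at hthis
    have i3 := hiBx0 σ τ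
    have i4 := hif0 σ τ
    rw [intervalIntegral.integral_add i1 i2, intervalIntegral.integral_add i3 i4]
    have hrearr : ∀ a b c d : Fin p → ℂ, (a + b) - (c + d) = (a - c) + (b - d) := by
      intros; abel
    rw [hrearr]
    have hT1 : ‖(∫ u in σ..τ, RMulVec B (gd (⌊u + (r - rr n)⌋ - m n))) -
        ∫ u in σ..τ, RMulVec B (x ((⌊u⌋ : ℤ) : ℝ))‖ ≤ E1' σ t n := by
      rw [← intervalIntegral.integral_sub i1 i3]
      refine le_trans (intervalIntegral.norm_integral_le_integral_norm hστ) ?_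
      rw [hE1']
      simp only
      refine intervalIntegral.integral_mono_interval (le_refl σ) hστ hτt
        (ae_of_all _ (fun u => norm_nonneg _)) ?_
      exact ((hiBgd (r - rr n) (m n) σ t).sub (hiBx0 σ t)).norm
    have hT2 : ‖(∫ u in σ..τ, h ((u + (r - rr n)) - ((m n : ℤ) : ℝ))) -
        ∫ u in σ..τ, f u‖ ≤ E2' σ t n + 2 * Cf * |r - rr n| := by
      have hcv1 : (∫ u in σ..τ, h ((u + (r - rr n)) - ((m n : ℤ) : ℝ))) =
          ∫ w in (σ + (r - rr n))..(τ + (r - rr n)), h (w - ((m n : ℤ) : ℝ)) :=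
        intervalIntegral.integral_comp_add_right (fun w => h (w - ((m n : ℤ) : ℝ))) (r - rr n)
      rw [hcv1]
      have hdec : (∫ w in (σ + (r - rr n))..(τ + (r - rr n)), h (w - ((m n : ℤ) : ℝ))) =
          ((∫ w in (σ + (r - rr n))..σ, h (w - ((m n : ℤ) : ℝ))) +
            ∫ w in σ..τ, h (w - ((m n : ℤ) : ℝ))) +
            ∫ w in τ..(τ + (r - rr n)), h (w - ((m n : ℤ) : ℝ)) := by
        rw [intervalIntegral.integral_add_adjacent_intervals (hihs _ _ _) (hihs _ _ _),
          intervalIntegral.integral_add_adjacent_intervals (hihs _ _ _) (hihs _ _ _)]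
      rw [hdec]
      have hmid : ‖(∫ w in σ..τ, h (w - ((m n : ℤ) : ℝ))) - ∫ w in σ..τ, f w‖ ≤
          E2' σ t n := by
        rw [← intervalIntegral.integral_sub (hihs _ _ _) (hif0 _ _)]
        refine le_trans (intervalIntegral.norm_integral_le_integral_norm hστ) ?_
        rw [hE2']
        simp only
        refine intervalIntegral.integral_mono_interval (le_refl σ) hστ hτt
          (ae_of_all _ (fun w => norm_nonneg _)) ?_
        exact ((hihs _ _ _).sub (hif0 _ _)).norm
      have hedge1 : ‖∫ w in (σ + (r - rr n))..σ, h (w - ((m n : ℤ) : ℝ))‖ ≤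
          Cf * |r - rr n| := by
        have hb := intervalIntegral.norm_integral_le_of_norm_le_const (C := Cf)
          (a := σ + (r - rr n)) (b := σ) (f := fun w => h (w - ((m n : ℤ) : ℝ)))
          (fun w _ => hhb _)
        have harg : σ - (σ + (r - rr n)) = -(r - rr n) := by ring
        rwa [harg, abs_neg] at hb
      have hedge2 : ‖∫ w in τ..(τ + (r - rr n)), h (w - ((m n : ℤ) : ℝ))‖ ≤
          Cf * |r - rr n| := by
        have hb := intervalIntegral.norm_integral_le_of_norm_le_const (C := Cf)
          (a := τ) (b := τ + (r - rr n)) (f := fun w => h (w - ((m n : ℤ) : ℝ)))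
          (fun w _ => hhb _)
        have harg : (τ + (r - rr n)) - τ = r - rr n := by ring
        rwa [harg] at hb
      have hre : ∀ a b c d : Fin p → ℂ, ((a + b) + c) - d = (b - d) + (a + c) := by
        intros; abel
      rw [hre]
      refine le_trans (norm_add_le _ _) ?_
      have hac := norm_add_le (∫ w in (σ + (r - rr n))..σ, h (w - ((m n : ℤ) : ℝ)))
        (∫ w in τ..(τ + (r - rr n)), h (w - ((m n : ℤ) : ℝ)))
      linarith
    calc ‖((∫ u in σ..τ, RMulVec B (gd (⌊u + (r - rr n)⌋ - m n))) -
          ∫ u in σ..τ, RMulVec B (x ((⌊u⌋ : ℤ) : ℝ))) +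
          ((∫ u in σ..τ, h ((u + (r - rr n)) - ((m n : ℤ) : ℝ))) - ∫ u in σ..τ, f u)‖ ≤
        ‖(∫ u in σ..τ, RMulVec B (gd (⌊u + (r - rr n)⌋ - m n))) -
          ∫ u in σ..τ, RMulVec B (x ((⌊u⌋ : ℤ) : ℝ))‖ +
        ‖(∫ u in σ..τ, h ((u + (r - rr n)) - ((m n : ℤ) : ℝ))) - ∫ u in σ..τ, f u‖ :=
      norm_add_le _ _
    _ ≤ E1' σ t n + (E2' σ t n + 2 * Cf * |r - rr n|) := add_le_add hT1 hT2
    _ = ε' σ t n := by rw [hEps']; ring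
  -- backward convergence
  have hback : ∀ t : ℝ, Tendsto (fun n => g (t - s n)) atTop (𝓝 (x t)) := by
    intro t
    set k : ℤ := ⌊t⌋ with hk
    have hkt : ((k : ℤ) : ℝ) ≤ t := Int.floor_le t
    have hanchor : Tendsto (fun n => g ((k : ℝ) - s n)) atTop (𝓝 (x ((k : ℤ) : ℝ))) := by
      refine tendsto_of_norm_sub_le (v := fun n => gd (k - m n)) (hgd2 k)
        (by have := hδ'.abs.const_mul M; simpa using this) ?_
      intro n
      show ‖g ((k : ℝ) - s n) - gd (k - m n)‖ ≤ M * |r - rr n|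
      have h1 : gd (k - m n) = g (((k - m n : ℤ) : ℝ) - r) := (hgr (k - m n)).symm
      rw [h1]
      have h2 := hglip ((((k - m n : ℤ)) : ℝ) - r) ((k : ℝ) - s n)
      have h3 : ((k : ℝ) - s n) - ((((k - m n : ℤ)) : ℝ) - r) = r - rr n := by
        rw [hsdef n]; push_cast; ring
      rw [h3] at h2
      exact h2
    have hzb : ∀ n, ‖g (t - s n) - x t‖ ≤
        (‖g ((k : ℝ) - s n) - x ((k : ℤ) : ℝ)‖ + ε' ((k : ℤ) : ℝ) t n) *
          Real.exp (KA * (t - ((k : ℤ) : ℝ))) := by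
      intro n
      have hwc : Continuous (fun τ => g (τ - s n) - x τ) :=
        (hgc.comp (continuous_id.sub continuous_const)).sub hxc
      have hkey : ∀ τ ∈ Set.Icc ((k : ℤ) : ℝ) t, ‖g (τ - s n) - x τ‖ ≤
          (‖g ((k : ℝ) - s n) - x ((k : ℤ) : ℝ)‖ + ε' ((k : ℤ) : ℝ) t n) +
            KA * ∫ u in ((k : ℤ) : ℝ)..τ, ‖g (u - s n) - x u‖ := by
        intro τ hτ
        obtain ⟨hkτ, hτt⟩ := hτ
        have hge : g (τ - s n) = g ((k : ℝ) - s n) +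
            ((∫ u in ((k : ℤ) : ℝ)..τ, RMulVec A (g (u - s n))) +
              ∫ u in ((k : ℤ) : ℝ)..τ, (RMulVec B (gd (⌊u + (r - rr n)⌋ - m n)) +
                h ((u + (r - rr n)) - ((m n : ℤ) : ℝ)))) := by
          have h1 := hgeq ((k : ℝ) - s n) (τ - s n) (by linarith)
          have h2' : (∫ u in ((k : ℝ) - s n)..(τ - s n), RMulVec A (g u)) =
              ∫ u in ((k : ℤ) : ℝ)..τ, RMulVec A (g (u - s n)) := by
            rw [intervalIntegral.integral_comp_sub_right (fun u => RMulVec A (g u)) (s n)]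
          have h3' : (∫ u in ((k : ℝ) - s n)..(τ - s n),
              (RMulVec B (gd ⌊u + r⌋) + h (u + r))) =
              ∫ u in ((k : ℤ) : ℝ)..τ,
                (RMulVec B (gd ⌊(u - s n) + r⌋) + h ((u - s n) + r)) := by
            rw [intervalIntegral.integral_comp_sub_right
              (fun u => RMulVec B (gd ⌊u + r⌋) + h (u + r)) (s n)]
          have h4 : ∀ u : ℝ, RMulVec B (gd ⌊(u - s n) + r⌋) + h ((u - s n) + r) =
              RMulVec B (gd (⌊u + (r - rr n)⌋ - m n)) +
                h ((u + (r - rr n)) - ((m n : ℤ) : ℝ)) := by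
            intro u
            have hfl : ⌊(u - s n) + r⌋ = ⌊u + (r - rr n)⌋ - m n := by
              rw [hsdef n, show u - ((m n : ℝ) + rr n) + r =
                (u + (r - rr n)) - (m n : ℝ) by ring, Int.floor_sub_intCast]
            have harg : (u - s n) + r = (u + (r - rr n)) - ((m n : ℤ) : ℝ) := by
              rw [hsdef n]; push_cast; ring
            rw [hfl, harg]
          have h5 : (∫ u in ((k : ℤ) : ℝ)..τ,
              (RMulVec B (gd ⌊(u - s n) + r⌋) + h ((u - s n) + r))) =
              ∫ u in ((k : ℤ) : ℝ)..τ, (RMulVec B (gd (⌊u + (r - rr n)⌋ - m n)) +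
                h ((u + (r - rr n)) - ((m n : ℤ) : ℝ))) :=
            intervalIntegral.integral_congr (fun u _ => h4 u)
          rw [h1, h2', h3', h5]
        have hxeq : x τ = x ((k : ℤ) : ℝ) +
            ((∫ u in ((k : ℤ) : ℝ)..τ, RMulVec A (x u)) +
              ∫ u in ((k : ℤ) : ℝ)..τ, (RMulVec B (x ((⌊u⌋ : ℤ) : ℝ)) + f u)) := by
          have h1 := hxe' ((k : ℤ) : ℝ) τ hkτ
          have h2 : (∫ u in ((k : ℤ) : ℝ)..τ, F u) =
              (∫ u in ((k : ℤ) : ℝ)..τ, RMulVec A (x u)) +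
                ∫ u in ((k : ℤ) : ℝ)..τ, (RMulVec B (x ((⌊u⌋ : ℤ) : ℝ)) + f u) := by
            rw [← intervalIntegral.integral_add (hiA x hxc _ _)
              ((hiBx0 _ _).add (hif0 _ _))]
            exact intervalIntegral.integral_congr (fun u _ => hsplitF0 u)
          rw [h1, h2]
        have hAdiff : (∫ u in ((k : ℤ) : ℝ)..τ, RMulVec A (g (u - s n))) -
            (∫ u in ((k : ℤ) : ℝ)..τ, RMulVec A (x u)) =
            ∫ u in ((k : ℤ) : ℝ)..τ, RMulVec A (g (u - s n) - x u) := by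
          rw [← intervalIntegral.integral_sub (hiA (fun u => g (u - s n))
            (hgc.comp (continuous_id.sub continuous_const)) _ _) (hiA x hxc _ _)]
          exact intervalIntegral.integral_congr (fun u _ => RMulVec_sub A _ _)
        have hwrep : g (τ - s n) - x τ =
            (g ((k : ℝ) - s n) - x ((k : ℤ) : ℝ)) +
              ((∫ u in ((k : ℤ) : ℝ)..τ, RMulVec A (g (u - s n) - x u)) +
                ((∫ u in ((k : ℤ) : ℝ)..τ, (RMulVec B (gd (⌊u + (r - rr n)⌋ - m n)) +
                    h ((u + (r - rr n)) - ((m n : ℤ) : ℝ)))) -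
                  ∫ u in ((k : ℤ) : ℝ)..τ, (RMulVec B (x ((⌊u⌋ : ℤ) : ℝ)) + f u))) := by
          rw [hge, hxeq, ← hAdiff]
          abel
        rw [hwrep]
        have hb1 := hnormA (fun u => g (u - s n) - x u) hwc ((k : ℤ) : ℝ) τ hkτ
        have hb2 := hC2' ((k : ℤ) : ℝ) t n τ hkτ hτt
        refine le_trans (norm_add_le _ _) ?_
        have hstep := norm_add_le
          (∫ u in ((k : ℤ) : ℝ)..τ, RMulVec A (g (u - s n) - x u))
          ((∫ u in ((k : ℤ) : ℝ)..τ, (RMulVec B (gd (⌊u + (r - rr n)⌋ - m n)) +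
              h ((u + (r - rr n)) - ((m n : ℤ) : ℝ)))) -
            ∫ u in ((k : ℤ) : ℝ)..τ, (RMulVec B (x ((⌊u⌋ : ℤ) : ℝ)) + f u))
        linarith
      exact gronwall_integral hkt
        (add_nonneg (norm_nonneg _) (hε'nn ((k : ℤ) : ℝ) t n hkt)) hKA0
        hwc.norm (fun τ => norm_nonneg _) hkey
    have hrhs : Tendsto (fun n => (‖g ((k : ℝ) - s n) - x ((k : ℤ) : ℝ)‖ +
        ε' ((k : ℤ) : ℝ) t n) * Real.exp (KA * (t - ((k : ℤ) : ℝ)))) atTop (𝓝 0) := by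
      have h1 : Tendsto (fun n => ‖g ((k : ℝ) - s n) - x ((k : ℤ) : ℝ)‖) atTop (𝓝 0) := by
        have := (hanchor.sub (tendsto_const_nhds (x := x ((k : ℤ) : ℝ)))).norm
        simpa using this
      have := (h1.add (hε'tend ((k : ℤ) : ℝ) t)).mul_const
        (Real.exp (KA * (t - ((k : ℤ) : ℝ))))
      simpa using this
    have hzt : Tendsto (fun n => g (t - s n) - x t) atTop (𝓝 0) :=
      squeeze_zero_norm hzb hrhs
    have := hzt.add (tendsto_const_nhds (x := x t))
    simpa using this
  exact ⟨g, hg, hback⟩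







/-- A bounded solution `x` of the DEPCA `x'(t) = A x(t) + B x(⌊t⌋) + f(t)` with `f`
`ℤ`-almost automorphic is almost automorphic if and only if its restriction to `ℤ`
is discrete almost automorphic. -/
theorem bounded_depca_solution_aa_iff_discrete_aa {p : ℕ}
    (A B : Matrix (Fin p) (Fin p) ℝ)
    (f : ℝ → Fin p → ℂ) (hf : ZAlmostAutomorphic p f)
    (x : ℝ → Fin p → ℂ) (hxb : ∃ C : ℝ, ∀ t : ℝ, ‖x t‖ ≤ C)
    (hx : IsDEPCASolution A B f x) :
    AlmostAutomorphic p x ↔ DiscreteAA p (fun n : ℤ => x (n : ℝ)) := by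
  constructor
  · -- easy direction
    intro hAA s
    obtain ⟨φ, g, hφ, h1, h2⟩ := hAA.2.2 (fun n => (s n : ℝ))
    refine ⟨φ, fun k => g (k : ℝ), hφ, fun k => ?_, fun k => ?_⟩
    · have h1' := h1 (k : ℝ)
      have : (fun n => x (((k + s (φ n) : ℤ)) : ℝ)) = fun n => x ((k : ℝ) + (s (φ n) : ℝ)) := by
        funext n; rw [Int.cast_add]
      rw [this]
      exact h1'
    · have h2' := h2 (k : ℝ)
      have : (fun n => g (((k - s (φ n) : ℤ)) : ℝ)) = fun n => g ((k : ℝ) - (s (φ n) : ℝ)) := by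
        funext n; rw [Int.cast_sub]
      rw [this]
      exact h2'
  · -- hard direction
    intro hD
    obtain ⟨C, hC⟩ := hxb
    obtain ⟨⟨⟨Cf, hCf⟩, hfc, _⟩, hfAA⟩ := hf
    have hfm : AEStronglyMeasurable f (volume : Measure ℝ) := aesm_of_cont_off_int hfc
    refine ⟨⟨C, hC⟩, hx.1, ?_⟩
    intro s'
    -- split into integer and fractional parts
    set m' : ℕ → ℤ := fun n => ⌊s' n⌋ with hm'
    set r' : ℕ → ℝ := fun n => Int.fract (s' n) with hr'
    have hs'def : ∀ n, s' n = (m' n : ℝ) + r' n := by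
      intro n
      simp only [hm', hr', Int.fract]
      ring
    obtain ⟨r, hrcl, φ₁, hφ₁, hr₁⟩ :=
      tendsto_subseq_of_bounded (Metric.isBounded_Icc (0:ℝ) 1)
        (fun n => (⟨Int.fract_nonneg _, le_of_lt (Int.fract_lt_one _)⟩ :
          r' n ∈ Set.Icc (0:ℝ) 1))
    obtain ⟨φ₂, gd, hφ₂, hgd₁, hgd₂⟩ := hD (fun n => m' (φ₁ n))
    obtain ⟨φ₃, h, hφ₃, hh₁, hh₂⟩ := hfAA (fun n => m' (φ₁ (φ₂ n)))
    set φ : ℕ → ℕ := fun n => φ₁ (φ₂ (φ₃ n)) with hφdef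
    have hφ : StrictMono φ := hφ₁.comp (hφ₂.comp hφ₃)
    have hr : Tendsto (fun n => r' (φ n)) atTop (𝓝 r) :=
      hr₁.comp ((hφ₂.comp hφ₃).tendsto_atTop)
    have hgd1 : ∀ k : ℤ, Tendsto (fun n => x (((k + m' (φ n) : ℤ)) : ℝ)) atTop (𝓝 (gd k)) :=
      fun k => (hgd₁ k).comp hφ₃.tendsto_atTop
    have hgd2 : ∀ k : ℤ, Tendsto (fun n => gd (k - m' (φ n))) atTop (𝓝 (x ((k : ℤ) : ℝ))) :=
      fun k => (hgd₂ k).comp hφ₃.tendsto_atTop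
    have hh1 : ∀ t : ℝ, Tendsto (fun n => f (t + ((m' (φ n) : ℤ) : ℝ))) atTop (𝓝 (h t)) :=
      fun t => hh₁ t
    have hh2 : ∀ t : ℝ, Tendsto (fun n => h (t - ((m' (φ n) : ℤ) : ℝ))) atTop (𝓝 (f t)) :=
      fun t => hh₂ t
    obtain ⟨g, hg1, hg2⟩ := depca_core A B f x C Cf hC hCf hfm hx.1 hx.2
      (fun n => s' (φ n)) (fun n => m' (φ n)) (fun n => r' (φ n)) r
      (fun n => hs'def (φ n)) hr gd h hgd1 hgd2 hh1 hh2
    exact ⟨φ, g, hφ, hg1, hg2⟩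
end

section
/- (Reduction Method.) Let A, B ∈ M_{p×p}(ℝ) be simultaneously triangularizable: there is an invertible matrix T such that Ā = T⁻¹AT and B̄ = T⁻¹BT are both upper triangular, with diagonal entries α₁,…,α_p of Ā and β₁,…,β_p of B̄ (the eigenvalues of A and B). Assume that for each i ∈ {1,…,p} and every u ∈ [0,1]: if α_i ≠ 0 then (β_i/α_i)(1 − e^{−u α_i}) ≠ −1, and if α_i = 0 then β_i u ≠ −1. Let f : ℝ → ℂ^p be Z-almost automorphic and let x be a bounded solution of the DEPCA x'(t) = A x(t) + B x(⌊t⌋) + f(t), i.e. a bounded continuous function satisfying x(t) = x(s) + ∫_s^t (A x(u) + B x(⌊u⌋) + f(u)) du for all s ≤ t. Then x is almost automorphic (in Bochner's sense) if and only if the sequence n ↦ x(n), n ∈ ℤ, is discrete almost automorphic. -/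
open MeasureTheory Filter Topology

open MeasureTheory Filter Topology Set


namespace RedAA

variable {p : ℕ}

noncomputable def opC (A : Matrix (Fin p) (Fin p) ℝ) : ℝ := ∑ i, ∑ j, |A i j|

lemma opC_nonneg (A : Matrix (Fin p) (Fin p) ℝ) : 0 ≤ opC A :=
  Finset.sum_nonneg fun _ _ => Finset.sum_nonneg fun _ _ => abs_nonneg _

lemma RMulVec_sub (A : Matrix (Fin p) (Fin p) ℝ) (v w : Fin p → ℂ) :
    RMulVec A (v - w) = RMulVec A v - RMulVec A w := by
  funext i
  simp [RMulVec, mul_sub, Finset.sum_sub_distrib]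

lemma norm_RMulVec_le (A : Matrix (Fin p) (Fin p) ℝ) (v : Fin p → ℂ) :
    ‖RMulVec A v‖ ≤ opC A * ‖v‖ := by
  have h0 : 0 ≤ opC A * ‖v‖ := mul_nonneg (opC_nonneg A) (norm_nonneg v)
  rw [pi_norm_le_iff_of_nonneg h0]
  intro i
  calc ‖∑ j, ((A i j : ℝ) : ℂ) * v j‖ ≤ ∑ j, ‖((A i j : ℝ) : ℂ) * v j‖ :=
        norm_sum_le _ _
    _ ≤ ∑ j, |A i j| * ‖v‖ := by
        refine Finset.sum_le_sum fun j _ => ?_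
        rw [norm_mul, Complex.norm_real, Real.norm_eq_abs]
        exact mul_le_mul_of_nonneg_left (norm_le_pi_norm v j) (abs_nonneg _)
    _ = (∑ j, |A i j|) * ‖v‖ := by rw [Finset.sum_mul]
    _ ≤ opC A * ‖v‖ := by
        refine mul_le_mul_of_nonneg_right ?_ (norm_nonneg v)
        exact Finset.single_le_sum (f := fun i => ∑ j, |A i j|)
          (fun i _ => Finset.sum_nonneg fun _ _ => abs_nonneg _) (Finset.mem_univ i)

lemma continuous_RMulVec (A : Matrix (Fin p) (Fin p) ℝ) : Continuous (RMulVec A) := by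
  refine continuous_pi fun i => ?_
  exact continuous_finset_sum _ fun j _ => continuous_const.mul (continuous_apply j)

/-- "Nice" functions: bounded and a.e. strongly measurable. -/
def Nice (h : ℝ → Fin p → ℂ) : Prop :=
  AEStronglyMeasurable h volume ∧ ∃ C, ∀ t, ‖h t‖ ≤ C

lemma Nice.intervalIntegrable {h : ℝ → Fin p → ℂ} (hh : Nice h) (a b : ℝ) :
    IntervalIntegrable h volume a b := by
  obtain ⟨hm, C, hC⟩ := hh
  rw [intervalIntegrable_iff]
  refine Integrable.mono' (g := fun _ => C)
    (integrableOn_const measure_Ioc_lt_top.ne) hm.restrict ?_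
  exact Eventually.of_forall fun t => hC t

lemma Nice.shift {h : ℝ → Fin p → ℂ} (hh : Nice h) (c : ℝ) :
    Nice (fun t => h (t + c)) := by
  obtain ⟨hm, C, hC⟩ := hh
  exact ⟨hm.comp_quasiMeasurePreserving
    (measurePreserving_add_right volume c).quasiMeasurePreserving, C, fun t => hC _⟩

lemma Nice.sub {h₁ h₂ : ℝ → Fin p → ℂ} (hh₁ : Nice h₁) (hh₂ : Nice h₂) :
    Nice (h₁ - h₂) := by
  obtain ⟨hm₁, C₁, hC₁⟩ := hh₁
  obtain ⟨hm₂, C₂, hC₂⟩ := hh₂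
  refine ⟨hm₁.sub hm₂, C₁ + C₂, fun t => ?_⟩
  exact (norm_sub_le _ _).trans (add_le_add (hC₁ t) (hC₂ t))

lemma exp_sub_one_le {y : ℝ} (hy : 0 ≤ y) : Real.exp y - 1 ≤ y * Real.exp y := by
  have h1 : -y + 1 ≤ Real.exp (-y) := Real.add_one_le_exp (-y)
  have h2 : (0:ℝ) < Real.exp y := Real.exp_pos y
  have h3 : Real.exp (-y) * Real.exp y = 1 := by
    rw [← Real.exp_add]; simp
  nlinarith

lemma gronwallBound_le {δ K ε x : ℝ} (hδ : 0 ≤ δ) (hK : 0 ≤ K) (hε : 0 ≤ ε)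
    (hx0 : 0 ≤ x) (hx1 : x ≤ 1) :
    gronwallBound δ K ε x ≤ (δ + ε) * Real.exp K := by
  rcases eq_or_ne K 0 with hK0 | hK0
  · subst hK0
    rw [gronwallBound_K0, Real.exp_zero]
    simp only []
    nlinarith
  · have hKpos : 0 < K := lt_of_le_of_ne hK (Ne.symm hK0)
    rw [gronwallBound_of_K_ne_0 hK0]
    have hKx : K * x ≤ K := by nlinarith
    have he1 : Real.exp (K * x) ≤ Real.exp K := Real.exp_le_exp.2 hKx
    have he2 : Real.exp (K * x) - 1 ≤ (K * x) * Real.exp (K * x) :=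
      exp_sub_one_le (by positivity)
    have he3 : (0:ℝ) < Real.exp (K * x) := Real.exp_pos _
    have h4 : ε / K * (Real.exp (K * x) - 1) ≤ ε * (x * Real.exp (K * x)) := by
      rw [div_mul_eq_mul_div, div_le_iff₀ hKpos]
      nlinarith
    have h5 : ε * (x * Real.exp (K * x)) ≤ ε * Real.exp K := by
      have : x * Real.exp (K * x) ≤ Real.exp K := by nlinarith
      exact mul_le_mul_of_nonneg_left this hε
    nlinarith

end RedAA

open MeasureTheory Filter Topology Set

namespace RedAA

variable {p : ℕ}

/-- The comparison constant. -/
noncomputable def KK (A B : Matrix (Fin p) (Fin p) ℝ) : ℝ :=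
  (1 + opC A + opC B) * Real.exp (opC A) + 1

lemma one_le_KK (A B : Matrix (Fin p) (Fin p) ℝ) : 1 ≤ KK A B := by
  have h1 : (1:ℝ) ≤ Real.exp (opC A) := Real.one_le_exp (opC_nonneg A)
  have h2 := opC_nonneg A
  have h3 := opC_nonneg B
  rw [KK]
  nlinarith

lemma KK_pos (A B : Matrix (Fin p) (Fin p) ℝ) : 0 < KK A B :=
  lt_of_lt_of_le one_pos (one_le_KK A B)

lemma key_bound (A B : Matrix (Fin p) (Fin p) ℝ) (d G : ℝ → Fin p → ℂ) (k η : ℝ)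
    (hd : Continuous d)
    (hG : ∀ t ∈ Icc k (k + 1), ‖G t‖ ≤ η)
    (hGk : G k = 0)
    (hid : ∀ t ∈ Icc k (k + 1),
      d t = d k + (∫ u in k..t, (RMulVec A (d u) + RMulVec B (d k))) + G t) :
    ∀ t ∈ Icc k (k + 1), ‖d t‖ ≤ KK A B * (‖d k‖ + η) := by
  have hη : 0 ≤ η := le_trans (norm_nonneg _) (hG k ⟨le_refl _, by linarith⟩)
  set h : ℝ → Fin p → ℂ := fun u => RMulVec A (d u) + RMulVec B (d k) with hh
  have hhc : Continuous h := ((continuous_RMulVec A).comp hd).add continuous_const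
  set E0 : ℝ → Fin p → ℂ := fun t => d k + ∫ u in k..t, h u with hE0
  have hderiv : ∀ t : ℝ, HasDerivAt E0 (h t) t := by
    intro t
    exact (intervalIntegral.integral_hasDerivAt_right
      (hhc.intervalIntegrable k t) (hhc.stronglyMeasurableAtFilter volume (𝓝 t))
      hhc.continuousAt).const_add (d k)
  have hE0cont : Continuous E0 :=
    continuous_iff_continuousAt.2 fun t => (hderiv t).continuousAt
  have hdE : ∀ t ∈ Icc k (k + 1), d t = E0 t + G t := fun t ht => hid t ht
  have hdknorm : ‖E0 k‖ = ‖d k‖ := by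
    simp [hE0, intervalIntegral.integral_same]
  have hbound : ∀ s ∈ Ico k (k + 1),
      ‖h s‖ ≤ opC A * ‖E0 s‖ + (opC A * η + opC B * ‖d k‖) := by
    intro s hs
    have hs' : s ∈ Icc k (k + 1) := Ico_subset_Icc_self hs
    have h1 : ‖h s‖ ≤ opC A * ‖d s‖ + opC B * ‖d k‖ :=
      (norm_add_le _ _).trans (add_le_add (norm_RMulVec_le A _) (norm_RMulVec_le B _))
    have h2 : ‖d s‖ ≤ ‖E0 s‖ + η := by
      rw [hdE s hs']
      exact (norm_add_le _ _).trans (add_le_add le_rfl (hG s hs'))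
    have h3 := opC_nonneg A
    nlinarith
  have key := norm_le_gronwallBound_of_norm_deriv_right_le (f := E0) (f' := h)
      (δ := ‖d k‖) (K := opC A) (ε := opC A * η + opC B * ‖d k‖) (a := k) (b := k + 1)
      hE0cont.continuousOn (fun s _ => (hderiv s).hasDerivWithinAt)
      (le_of_eq hdknorm) hbound
  intro t ht
  have hkey := key t ht
  have hgb : gronwallBound ‖d k‖ (opC A) (opC A * η + opC B * ‖d k‖) (t - k) ≤
      (‖d k‖ + (opC A * η + opC B * ‖d k‖)) * Real.exp (opC A) := by
    refine gronwallBound_le (norm_nonneg _) (opC_nonneg A) ?_ ?_ ?_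
    · have := opC_nonneg A; have := opC_nonneg B; positivity
    · linarith [ht.1]
    · linarith [ht.2]
  have hdt : ‖d t‖ ≤ ‖E0 t‖ + η := by
    rw [hdE t ht]
    exact (norm_add_le _ _).trans (add_le_add le_rfl (hG t ht))
  have hE : (1:ℝ) ≤ Real.exp (opC A) := Real.one_le_exp (opC_nonneg A)
  have hCA := opC_nonneg A
  have hCB := opC_nonneg B
  have hdk0 : (0:ℝ) ≤ ‖d k‖ := norm_nonneg _
  have hfin : ‖d t‖ ≤ (‖d k‖ + (opC A * η + opC B * ‖d k‖)) * Real.exp (opC A) + η := by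
    linarith
  rw [KK]
  nlinarith [mul_nonneg (mul_nonneg hCA hdk0) (Real.exp_pos (opC A)).le,
    mul_nonneg (mul_nonneg hCB hη) (Real.exp_pos (opC A)).le,
    mul_le_mul_of_nonneg_left hE hη, hdk0, hη]

lemma main_est (A B : Matrix (Fin p) (Fin p) ℝ) (x₁ x₂ f₁ f₂ : ℝ → Fin p → ℂ) (k : ℝ)
    (hx₁ : Continuous x₁) (hx₂ : Continuous x₂)
    (hf₁ : IntervalIntegrable f₁ volume k (k + 1))
    (hf₂ : IntervalIntegrable f₂ volume k (k + 1))
    (heq₁ : ∀ t ∈ Icc k (k + 1),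
      x₁ t = x₁ k + ∫ u in k..t, (RMulVec A (x₁ u) + RMulVec B (x₁ k) + f₁ u))
    (heq₂ : ∀ t ∈ Icc k (k + 1),
      x₂ t = x₂ k + ∫ u in k..t, (RMulVec A (x₂ u) + RMulVec B (x₂ k) + f₂ u)) :
    ∀ t ∈ Icc k (k + 1), ‖x₁ t - x₂ t‖ ≤
      KK A B * (‖x₁ k - x₂ k‖ + ∫ u in k..(k + 1), ‖f₁ u - f₂ u‖) := by
  set d : ℝ → Fin p → ℂ := fun t => x₁ t - x₂ t with hd
  set G : ℝ → Fin p → ℂ := fun t => ∫ u in k..t, (f₁ u - f₂ u) with hGdef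
  set η : ℝ := ∫ u in k..(k + 1), ‖f₁ u - f₂ u‖ with hη
  have hsub : ∀ a b : ℝ, a ∈ Icc k (k+1) → b ∈ Icc k (k+1) → uIcc a b ⊆ uIcc k (k+1) := by
    intro a b ha hb
    rw [uIcc_of_le (by linarith : k ≤ k + 1)]
    exact uIcc_subset_Icc ha hb
  have hint₁ : ∀ t ∈ Icc k (k + 1), IntervalIntegrable f₁ volume k t := by
    intro t ht
    exact hf₁.mono_set (hsub k t ⟨le_refl _, by linarith⟩ ht)
  have hint₂ : ∀ t ∈ Icc k (k + 1), IntervalIntegrable f₂ volume k t := by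
    intro t ht
    exact hf₂.mono_set (hsub k t ⟨le_refl _, by linarith⟩ ht)
  have hG : ∀ t ∈ Icc k (k + 1), ‖G t‖ ≤ η := by
    intro t ht
    calc ‖G t‖ ≤ ∫ u in k..t, ‖f₁ u - f₂ u‖ :=
          intervalIntegral.norm_integral_le_integral_norm ht.1
      _ ≤ η := by
          refine intervalIntegral.integral_mono_interval (le_refl k) ht.1 ht.2
            (Eventually.of_forall fun u => by simp [Pi.zero_apply, norm_nonneg]) ?_
          exact (hf₁.sub hf₂).norm
  have hGk : G k = 0 := intervalIntegral.integral_same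
  have hid : ∀ t ∈ Icc k (k + 1),
      d t = d k + (∫ u in k..t, (RMulVec A (d u) + RMulVec B (d k))) + G t := by
    intro t ht
    have hi₁ : IntervalIntegrable (fun u => RMulVec A (x₁ u) + RMulVec B (x₁ k)) volume k t :=
      (((continuous_RMulVec A).comp hx₁).add continuous_const).intervalIntegrable k t
    have hi₂ : IntervalIntegrable (fun u => RMulVec A (x₂ u) + RMulVec B (x₂ k)) volume k t :=
      (((continuous_RMulVec A).comp hx₂).add continuous_const).intervalIntegrable k t
    have e₁ : x₁ t = x₁ k + ((∫ u in k..t, (RMulVec A (x₁ u) + RMulVec B (x₁ k)))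
        + ∫ u in k..t, f₁ u) := by
      rw [heq₁ t ht, ← intervalIntegral.integral_add hi₁ (hint₁ t ht)]
    have e₂ : x₂ t = x₂ k + ((∫ u in k..t, (RMulVec A (x₂ u) + RMulVec B (x₂ k)))
        + ∫ u in k..t, f₂ u) := by
      rw [heq₂ t ht, ← intervalIntegral.integral_add hi₂ (hint₂ t ht)]
    have hGt : G t = (∫ u in k..t, f₁ u) - ∫ u in k..t, f₂ u :=
      intervalIntegral.integral_sub (hint₁ t ht) (hint₂ t ht)
    have hAd : (∫ u in k..t, (RMulVec A (d u) + RMulVec B (d k)))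
        = (∫ u in k..t, (RMulVec A (x₁ u) + RMulVec B (x₁ k)))
          - ∫ u in k..t, (RMulVec A (x₂ u) + RMulVec B (x₂ k)) := by
      rw [← intervalIntegral.integral_sub hi₁ hi₂]
      refine intervalIntegral.integral_congr fun u _ => ?_
      simp only [hd, RMulVec_sub]
      abel
    simp only [hd]
    rw [e₁, e₂, hAd, hGt]
    abel
  exact key_bound A B d G k η (hx₁.sub hx₂) hG hGk hid

end RedAA

open MeasureTheory Filter Topology Set

namespace RedAA

variable {p : ℕ}

lemma Nice.shift_neg {h : ℝ → Fin p → ℂ} (hh : Nice h) (c : ℝ) :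
    Nice (fun t => h (t - c)) := by
  simpa [sub_eq_add_neg] using hh.shift (-c)

lemma tendsto_int_norm_zero
    {u : ℕ → Fin p → ℂ} {v : Fin p → ℂ} (h : Tendsto u atTop (𝓝 v)) :
    Tendsto (fun n => ‖u n - v‖) atTop (𝓝 0) := by
  have := (h.sub (tendsto_const_nhds (x := v))).norm
  simpa using this

lemma dct_zero {F : ℕ → ℝ → Fin p → ℂ} {C : ℝ} (a b : ℝ)
    (hmeas : ∀ n, AEStronglyMeasurable (F n) volume)
    (hbd : ∀ n t, ‖F n t‖ ≤ C)
    (hlim : ∀ t, Tendsto (fun n => F n t) atTop (𝓝 0)) :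
    Tendsto (fun n => ∫ u in a..b, ‖F n u‖) atTop (𝓝 0) := by
  have h0 : (∫ u in a..b, (0:ℝ)) = 0 := by simp
  rw [← h0]
  refine intervalIntegral.tendsto_integral_filter_of_dominated_convergence
    (bound := fun _ => C) ?_ ?_ ?_ ?_
  · exact Eventually.of_forall fun n => ((hmeas n).norm).restrict
  · refine Eventually.of_forall fun n => Eventually.of_forall fun t _ => ?_
    rw [norm_norm]
    exact hbd n t
  · exact intervalIntegrable_const
  · refine Eventually.of_forall fun t _ => ?_
    have := (hlim t).norm
    simpa using this

lemma construct_y (A B : Matrix (Fin p) (Fin p) ℝ) (f g x : ℝ → Fin p → ℂ)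
    (Cf Cx L : ℝ) (hL : 0 ≤ L)
    (hfb : ∀ t, ‖f t‖ ≤ Cf) (hgb : ∀ t, ‖g t‖ ≤ Cf) (hxb : ∀ t, ‖x t‖ ≤ Cx)
    (hfm : AEStronglyMeasurable f volume) (hgm : AEStronglyMeasurable g volume)
    (hxc : Continuous x)
    (hxl : ∀ a b : ℝ, ‖x a - x b‖ ≤ L * |a - b|)
    (hloc : ∀ (k : ℤ) (t : ℝ), t ∈ Icc (k:ℝ) ((k:ℝ) + 1) →
      x t = x (k:ℝ) + ∫ u in (k:ℝ)..t, (RMulVec A (x u) + RMulVec B (x (k:ℝ)) + f u))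
    (m : ℕ → ℤ) (ξ : ℤ → Fin p → ℂ)
    (hfg : ∀ t : ℝ, Tendsto (fun n => f (t + (m n : ℝ))) atTop (𝓝 (g t)))
    (hgf : ∀ t : ℝ, Tendsto (fun n => g (t - (m n : ℝ))) atTop (𝓝 (f t)))
    (hxξ : ∀ k : ℤ, Tendsto (fun n => x ((k:ℝ) + (m n : ℝ))) atTop (𝓝 (ξ k)))
    (hξx : ∀ k : ℤ, Tendsto (fun n => ξ (k - m n)) atTop (𝓝 (x (k:ℝ)))) :
    ∃ y : ℝ → Fin p → ℂ,
      (∀ a b : ℝ, ‖y a - y b‖ ≤ L * |a - b|) ∧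
      (∀ t : ℝ, Tendsto (fun n => x (t + (m n : ℝ))) atTop (𝓝 (y t))) ∧
      (∀ t : ℝ, Tendsto (fun n => y (t - (m n : ℝ))) atTop (𝓝 (x t))) := by
  have hfnice : Nice f := ⟨hfm, Cf, hfb⟩
  have hgnice : Nice g := ⟨hgm, Cf, hgb⟩
  -- Step A: shifted local equation
  have hshift : ∀ (n : ℕ) (k : ℤ) (t : ℝ), t ∈ Icc (k:ℝ) ((k:ℝ) + 1) →
      x (t + (m n : ℝ)) = x ((k:ℝ) + (m n : ℝ)) + ∫ u in (k:ℝ)..t,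
        (RMulVec A (x (u + (m n : ℝ))) + RMulVec B (x ((k:ℝ) + (m n : ℝ)))
          + f (u + (m n : ℝ))) := by
    intro n k t ht
    have hmem : t + (m n : ℝ) ∈ Icc ((k + m n : ℤ):ℝ) (((k + m n : ℤ):ℝ) + 1) := by
      push_cast
      exact ⟨by linarith [ht.1], by linarith [ht.2]⟩
    have h1 := hloc (k + m n) (t + (m n : ℝ)) hmem
    have hc : ((k + m n : ℤ):ℝ) = (k:ℝ) + (m n : ℝ) := by push_cast; ring
    rw [hc] at h1
    rw [h1]
    congr 1
    exact (intervalIntegral.integral_comp_add_right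
      (fun v => RMulVec A (x v) + RMulVec B (x ((k:ℝ) + (m n : ℝ))) + f v) (m n : ℝ)).symm
  -- Step B: quantities tending to zero
  have hB1 : ∀ k : ℤ, Tendsto
      (fun n => ‖x ((k:ℝ) + (m n : ℝ)) - ξ k‖) atTop (𝓝 0) :=
    fun k => tendsto_int_norm_zero (hxξ k)
  have hB2 : ∀ k : ℝ, Tendsto
      (fun n => ∫ u in k..(k + 1), ‖f (u + (m n : ℝ)) - g u‖) atTop (𝓝 0) := by
    intro k
    refine dct_zero (C := Cf + Cf) k (k + 1)
      (fun n => ((hfnice.shift (m n : ℝ)).1).sub hgm) ?_ ?_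
    · intro n t
      exact (norm_sub_le _ _).trans (add_le_add (hfb _) (hgb _))
    · intro t
      have := (hfg t).sub (tendsto_const_nhds (x := g t))
      simpa using this
  -- Cauchy sequence and definition of y
  have hcont_shift : ∀ c : ℝ, Continuous fun u => x (u + c) :=
    fun c => hxc.comp (continuous_add_right c)
  have hest : ∀ (t : ℝ) (n n' : ℕ),
      ‖x (t + (m n : ℝ)) - x (t + (m n' : ℝ))‖ ≤ KK A B *
        ((‖x ((⌊t⌋:ℝ) + (m n : ℝ)) - ξ ⌊t⌋‖
          + ∫ u in (⌊t⌋:ℝ)..((⌊t⌋:ℝ) + 1), ‖f (u + (m n : ℝ)) - g u‖)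
        + (‖x ((⌊t⌋:ℝ) + (m n' : ℝ)) - ξ ⌊t⌋‖
          + ∫ u in (⌊t⌋:ℝ)..((⌊t⌋:ℝ) + 1), ‖f (u + (m n' : ℝ)) - g u‖)) := by
    intro t n n'
    set k : ℤ := ⌊t⌋
    have ht : t ∈ Icc (k:ℝ) ((k:ℝ) + 1) := ⟨Int.floor_le t, (Int.lt_floor_add_one t).le⟩
    have est := main_est A B (fun u => x (u + (m n : ℝ))) (fun u => x (u + (m n' : ℝ)))
      (fun u => f (u + (m n : ℝ))) (fun u => f (u + (m n' : ℝ))) (k:ℝ)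
      (hcont_shift _) (hcont_shift _)
      ((hfnice.shift _).intervalIntegrable _ _) ((hfnice.shift _).intervalIntegrable _ _)
      (fun s hs => hshift n k s hs) (fun s hs => hshift n' k s hs) t ht
    refine est.trans ?_
    refine mul_le_mul_of_nonneg_left ?_ (KK_pos A B).le
    have tri : ‖x ((k:ℝ) + (m n : ℝ)) - x ((k:ℝ) + (m n' : ℝ))‖ ≤
        ‖x ((k:ℝ) + (m n : ℝ)) - ξ k‖ + ‖x ((k:ℝ) + (m n' : ℝ)) - ξ k‖ := by
      have := norm_sub_le_norm_sub_add_norm_sub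
        (x ((k:ℝ) + (m n : ℝ))) (ξ k) (x ((k:ℝ) + (m n' : ℝ)))
      rw [norm_sub_rev (ξ k)] at this
      exact this
    have hint : (∫ u in (k:ℝ)..((k:ℝ) + 1),
        ‖f (u + (m n : ℝ)) - f (u + (m n' : ℝ))‖) ≤
        (∫ u in (k:ℝ)..((k:ℝ) + 1), ‖f (u + (m n : ℝ)) - g u‖)
        + ∫ u in (k:ℝ)..((k:ℝ) + 1), ‖f (u + (m n' : ℝ)) - g u‖ := by
      have i1 : IntervalIntegrable (fun u => ‖f (u + (m n : ℝ)) - g u‖) volume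
          (k:ℝ) ((k:ℝ) + 1) :=
        (((hfnice.shift _).sub hgnice).intervalIntegrable _ _).norm
      have i2 : IntervalIntegrable (fun u => ‖f (u + (m n' : ℝ)) - g u‖) volume
          (k:ℝ) ((k:ℝ) + 1) :=
        (((hfnice.shift _).sub hgnice).intervalIntegrable _ _).norm
      have i0 : IntervalIntegrable (fun u => ‖f (u + (m n : ℝ)) - f (u + (m n' : ℝ))‖)
          volume (k:ℝ) ((k:ℝ) + 1) :=
        (((hfnice.shift _).sub (hfnice.shift _)).intervalIntegrable _ _).norm
      rw [← intervalIntegral.integral_add i1 i2]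
      refine intervalIntegral.integral_mono_on (by linarith) i0 (i1.add i2) ?_
      intro u _
      have := norm_sub_le_norm_sub_add_norm_sub
        (f (u + (m n : ℝ))) (g u) (f (u + (m n' : ℝ)))
      rw [norm_sub_rev (g u)] at this
      exact this
    linarith
  have hcauchy : ∀ t : ℝ, CauchySeq (fun n => x (t + (m n : ℝ))) := by
    intro t
    set k : ℤ := ⌊t⌋
    set a : ℕ → ℝ := fun n => ‖x ((k:ℝ) + (m n : ℝ)) - ξ k‖
      + ∫ u in (k:ℝ)..((k:ℝ) + 1), ‖f (u + (m n : ℝ)) - g u‖ with hadef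
    have ha : Tendsto a atTop (𝓝 0) := by
      have := (hB1 k).add (hB2 (k:ℝ))
      simpa using this
    rw [Metric.cauchySeq_iff]
    intro ε hε
    have hKK := KK_pos A B
    have hε' : 0 < ε / (2 * KK A B) := by positivity
    obtain ⟨N, hN⟩ := (Metric.tendsto_atTop.1 ha) (ε / (2 * KK A B)) hε'
    refine ⟨N, fun n hn n' hn' => ?_⟩
    have h1 : a n < ε / (2 * KK A B) := by
      have := hN n hn
      rw [Real.dist_eq, sub_zero] at this
      exact lt_of_le_of_lt (le_abs_self _) this
    have h2 : a n' < ε / (2 * KK A B) := by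
      have := hN n' hn'
      rw [Real.dist_eq, sub_zero] at this
      exact lt_of_le_of_lt (le_abs_self _) this
    rw [dist_eq_norm]
    calc ‖x (t + (m n : ℝ)) - x (t + (m n' : ℝ))‖ ≤ KK A B * (a n + a n') := hest t n n'
      _ < KK A B * (ε / (2 * KK A B) + ε / (2 * KK A B)) := by
          exact mul_lt_mul_of_pos_left (by linarith) hKK
      _ = ε := by field_simp; ring
  have hylim : ∀ t : ℝ, ∃ v : Fin p → ℂ,
      Tendsto (fun n => x (t + (m n : ℝ))) atTop (𝓝 v) :=
    fun t => cauchySeq_tendsto_of_complete (hcauchy t)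
  choose y hy using hylim
  -- Lipschitz property of y
  have hyl : ∀ a b : ℝ, ‖y a - y b‖ ≤ L * |a - b| := by
    intro a b
    have htd : Tendsto (fun n => ‖x (a + (m n : ℝ)) - x (b + (m n : ℝ))‖) atTop
        (𝓝 ‖y a - y b‖) := ((hy a).sub (hy b)).norm
    refine le_of_tendsto htd (Eventually.of_forall fun n => ?_)
    have := hxl (a + (m n : ℝ)) (b + (m n : ℝ))
    have harg : (a + (m n : ℝ)) - (b + (m n : ℝ)) = a - b := by ring
    rwa [harg] at this
  have hycont : Continuous y := by
    have : LipschitzWith (Real.toNNReal L) y := by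
      refine LipschitzWith.of_dist_le_mul fun a b => ?_
      rw [dist_eq_norm, Real.dist_eq, Real.coe_toNNReal L hL]
      exact hyl a b
    exact this.continuous
  -- integer values of y
  have hyint : ∀ j : ℤ, y (j:ℝ) = ξ j := fun j => tendsto_nhds_unique (hy (j:ℝ)) (hxξ j)
  -- local equation for y
  have hyloc : ∀ (k : ℤ) (t : ℝ), t ∈ Icc (k:ℝ) ((k:ℝ) + 1) →
      y t = y (k:ℝ) + ∫ u in (k:ℝ)..t,
        (RMulVec A (y u) + RMulVec B (y (k:ℝ)) + g u) := by
    intro k t ht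
    have hIcc : ((k:ℝ)) ≤ t := ht.1
    have hInt : Tendsto (fun n => ∫ u in (k:ℝ)..t,
        (RMulVec A (x (u + (m n : ℝ))) + RMulVec B (x ((k:ℝ) + (m n : ℝ)))
          + f (u + (m n : ℝ)))) atTop
        (𝓝 (∫ u in (k:ℝ)..t, (RMulVec A (y u) + RMulVec B (y (k:ℝ)) + g u))) := by
      refine intervalIntegral.tendsto_integral_filter_of_dominated_convergence
        (bound := fun _ => opC A * Cx + opC B * Cx + Cf) ?_ ?_ ?_ ?_
      · refine Eventually.of_forall fun n => ?_
        have hc : Continuous fun u => RMulVec A (x (u + (m n : ℝ)))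
            + RMulVec B (x ((k:ℝ) + (m n : ℝ))) :=
          ((continuous_RMulVec A).comp (hcont_shift _)).add continuous_const
        exact ((hc.aestronglyMeasurable).add (hfnice.shift _).1).restrict
      · refine Eventually.of_forall fun n => Eventually.of_forall fun u _ => ?_
        calc ‖RMulVec A (x (u + (m n : ℝ))) + RMulVec B (x ((k:ℝ) + (m n : ℝ)))
              + f (u + (m n : ℝ))‖
            ≤ ‖RMulVec A (x (u + (m n : ℝ)))‖ + ‖RMulVec B (x ((k:ℝ) + (m n : ℝ)))‖
              + ‖f (u + (m n : ℝ))‖ := norm_add₃_le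
          _ ≤ opC A * Cx + opC B * Cx + Cf := by
              have l1 := (norm_RMulVec_le A (x (u + (m n : ℝ)))).trans
                (mul_le_mul_of_nonneg_left (hxb _) (opC_nonneg A))
              have l2 := (norm_RMulVec_le B (x ((k:ℝ) + (m n : ℝ)))).trans
                (mul_le_mul_of_nonneg_left (hxb _) (opC_nonneg B))
              have l3 := hfb (u + (m n : ℝ))
              linarith
      · exact intervalIntegrable_const
      · refine Eventually.of_forall fun u _ => ?_
        have t1 : Tendsto (fun n => RMulVec A (x (u + (m n : ℝ)))) atTop
            (𝓝 (RMulVec A (y u))) :=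
          ((continuous_RMulVec A).continuousAt.tendsto).comp (hy u)
        have t2 : Tendsto (fun n => RMulVec B (x ((k:ℝ) + (m n : ℝ)))) atTop
            (𝓝 (RMulVec B (y (k:ℝ)))) :=
          ((continuous_RMulVec B).continuousAt.tendsto).comp (hy (k:ℝ))
        exact (t1.add t2).add (hfg u)
    have h2 : Tendsto (fun n => x (t + (m n : ℝ))) atTop
        (𝓝 (y (k:ℝ) + ∫ u in (k:ℝ)..t, (RMulVec A (y u) + RMulVec B (y (k:ℝ)) + g u))) := by
      have := (hy (k:ℝ)).add hInt
      refine Tendsto.congr (fun n => ?_) this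
      exact (hshift n k t ht).symm
    exact tendsto_nhds_unique (hy t) h2
  refine ⟨y, hyl, hy, ?_⟩
  -- back convergence
  intro t
  set k : ℤ := ⌊t⌋ with hkdef
  have ht : t ∈ Icc (k:ℝ) ((k:ℝ) + 1) := ⟨Int.floor_le t, (Int.lt_floor_add_one t).le⟩
  -- shifted local equation for y
  have hyshift : ∀ (n : ℕ) (s : ℝ), s ∈ Icc (k:ℝ) ((k:ℝ) + 1) →
      y (s - (m n : ℝ)) = y ((k:ℝ) - (m n : ℝ)) + ∫ u in (k:ℝ)..s,
        (RMulVec A (y (u - (m n : ℝ))) + RMulVec B (y ((k:ℝ) - (m n : ℝ)))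
          + g (u - (m n : ℝ))) := by
    intro n s hs
    have hmem : s - (m n : ℝ) ∈ Icc ((k - m n : ℤ):ℝ) (((k - m n : ℤ):ℝ) + 1) := by
      push_cast
      exact ⟨by linarith [hs.1], by linarith [hs.2]⟩
    have h1 := hyloc (k - m n) (s - (m n : ℝ)) hmem
    have hc : ((k - m n : ℤ):ℝ) = (k:ℝ) - (m n : ℝ) := by push_cast; ring
    rw [hc] at h1
    rw [h1]
    congr 1
    exact (intervalIntegral.integral_comp_sub_right
      (fun v => RMulVec A (y v) + RMulVec B (y ((k:ℝ) - (m n : ℝ))) + g v) (m n : ℝ)).symm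
  have hb1 : Tendsto (fun n => ‖y ((k:ℝ) - (m n : ℝ)) - x (k:ℝ)‖) atTop (𝓝 0) := by
    have hcast : ∀ n, y ((k:ℝ) - (m n : ℝ)) = ξ (k - m n) := by
      intro n
      have : ((k - m n : ℤ):ℝ) = (k:ℝ) - (m n : ℝ) := by push_cast; ring
      rw [← this, hyint]
    refine tendsto_int_norm_zero ?_
    refine Tendsto.congr (fun n => (hcast n).symm) (hξx k)
  have hb2 : Tendsto (fun n => ∫ u in (k:ℝ)..((k:ℝ) + 1),
      ‖g (u - (m n : ℝ)) - f u‖) atTop (𝓝 0) := by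
    refine dct_zero (C := Cf + Cf) (k:ℝ) ((k:ℝ) + 1)
      (fun n => ((hgnice.shift_neg (m n : ℝ)).1).sub hfm) ?_ ?_
    · intro n u
      exact (norm_sub_le _ _).trans (add_le_add (hgb _) (hfb _))
    · intro u
      have := (hgf u).sub (tendsto_const_nhds (x := f u))
      simpa using this
  have hyb : ∀ n : ℕ, ‖y (t - (m n : ℝ)) - x t‖ ≤ KK A B *
      (‖y ((k:ℝ) - (m n : ℝ)) - x (k:ℝ)‖
        + ∫ u in (k:ℝ)..((k:ℝ) + 1), ‖g (u - (m n : ℝ)) - f u‖) := by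
    intro n
    exact main_est A B (fun u => y (u - (m n : ℝ))) x
      (fun u => g (u - (m n : ℝ))) f (k:ℝ)
      (hycont.comp (continuous_sub_right _)) hxc
      ((hgnice.shift_neg _).intervalIntegrable _ _) (hfnice.intervalIntegrable _ _)
      (fun s hs => hyshift n s hs) (fun s hs => hloc k s hs) t ht
  have hnorm0 : Tendsto (fun n => ‖y (t - (m n : ℝ)) - x t‖) atTop (𝓝 0) := by
    have hub : Tendsto (fun n => KK A B *
        (‖y ((k:ℝ) - (m n : ℝ)) - x (k:ℝ)‖
          + ∫ u in (k:ℝ)..((k:ℝ) + 1), ‖g (u - (m n : ℝ)) - f u‖)) atTop (𝓝 0) := by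
      have := (hb1.add hb2).const_mul (KK A B)
      simpa using this
    exact squeeze_zero (fun n => norm_nonneg _) hyb hub
  have := (tendsto_zero_iff_norm_tendsto_zero
    (f := fun n => y (t - (m n : ℝ)) - x t)).2 hnorm0
  have hfinal := this.add (tendsto_const_nhds (x := x t))
  simpa using hfinal

end RedAA

open MeasureTheory Filter Topology Set

namespace RedAA

variable {p : ℕ}

lemma BddPC.aesm {f : ℝ → Fin p → ℂ} (hf : BddPC p f) :
    AEStronglyMeasurable f volume := by
  set S : Set ℝ := {t : ℝ | ∀ n : ℤ, t ≠ (n : ℝ)} with hS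
  have hSc : Sᶜ = Set.range (fun n : ℤ => (n : ℝ)) := by
    ext t
    simp [hS, Set.mem_compl_iff, not_forall, eq_comm]
  have hcount : Sᶜ.Countable := by rw [hSc]; exact Set.countable_range _
  have hmeasS : MeasurableSet S := by
    have := hcount.measurableSet
    simpa using this.compl
  have h1 : AEStronglyMeasurable f (volume.restrict S) :=
    hf.2.1.aestronglyMeasurable hmeasS
  have hnull : (volume : Measure ℝ) Sᶜ = 0 := hcount.measure_zero _
  have hae : ∀ᵐ t ∂(volume : Measure ℝ), t ∈ S := by
    rw [ae_iff]
    exact hnull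
  rwa [Measure.restrict_eq_self_of_ae_mem hae] at h1

lemma local_eq {A B : Matrix (Fin p) (Fin p) ℝ} {f x : ℝ → Fin p → ℂ}
    (hx : IsDEPCASolution A B f x) :
    ∀ (k : ℤ) (t : ℝ), t ∈ Icc (k:ℝ) ((k:ℝ) + 1) →
      x t = x (k:ℝ) + ∫ u in (k:ℝ)..t,
        (RMulVec A (x u) + RMulVec B (x (k:ℝ)) + f u) := by
  intro k t ht
  rw [hx.2 (k:ℝ) t ht.1]
  congr 1
  refine intervalIntegral.integral_congr_ae ?_
  rw [ae_iff]
  refine measure_mono_null (fun u hu => ?_) (Real.volume_singleton (a := (k:ℝ) + 1))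
  simp only [Set.mem_setOf_eq, not_forall] at hu
  obtain ⟨hmem, hne⟩ := hu
  rw [Set.uIoc_of_le ht.1] at hmem
  rw [Set.mem_singleton_iff]
  by_contra hne1
  have hlt : u < (k:ℝ) + 1 := lt_of_le_of_ne (le_trans hmem.2 ht.2) hne1
  have hfl : ⌊u⌋ = k := Int.floor_eq_iff.2 ⟨hmem.1.le, hlt⟩
  rw [hfl] at hne
  exact hne rfl

lemma sol_lipschitz {A B : Matrix (Fin p) (Fin p) ℝ} {f x : ℝ → Fin p → ℂ} {Cx Cf : ℝ}
    (hx : IsDEPCASolution A B f x) (hxb : ∀ t, ‖x t‖ ≤ Cx) (hfb : ∀ t, ‖f t‖ ≤ Cf) :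
    ∀ a b : ℝ, ‖x a - x b‖ ≤ (opC A * Cx + opC B * Cx + Cf) * |a - b| := by
  set L := opC A * Cx + opC B * Cx + Cf with hLdef
  have key : ∀ a b : ℝ, b ≤ a → ‖x a - x b‖ ≤ L * |a - b| := by
    intro a b hba
    have h1 := hx.2 b a hba
    have h2 : x a - x b = ∫ u in b..a,
        (RMulVec A (x u) + RMulVec B (x ((⌊u⌋ : ℤ) : ℝ)) + f u) := by
      rw [h1]; abel
    rw [h2]
    refine intervalIntegral.norm_integral_le_of_norm_le_const fun u _ => ?_
    calc ‖RMulVec A (x u) + RMulVec B (x ((⌊u⌋ : ℤ) : ℝ)) + f u‖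
        ≤ ‖RMulVec A (x u)‖ + ‖RMulVec B (x ((⌊u⌋ : ℤ) : ℝ))‖ + ‖f u‖ := norm_add₃_le
      _ ≤ L := by
          have l1 := (norm_RMulVec_le A (x u)).trans
            (mul_le_mul_of_nonneg_left (hxb u) (opC_nonneg A))
          have l2 := (norm_RMulVec_le B (x ((⌊u⌋ : ℤ) : ℝ))).trans
            (mul_le_mul_of_nonneg_left (hxb _) (opC_nonneg B))
          have l3 := hfb u
          rw [hLdef]
          linarith
  intro a b
  rcases le_total b a with h | h
  · exact key a b h
  · rw [norm_sub_rev, abs_sub_comm]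
    exact key b a h

end RedAA


open Set RedAA in
/-- Reduction method: suppose `A` and `B` are simultaneously triangularizable by an
invertible matrix `T`, with the diagonal entries (eigenvalues) `αᵢ = (T⁻¹AT)ᵢᵢ`,
`βᵢ = (T⁻¹BT)ᵢᵢ` satisfying, for every `u ∈ [0,1]`:
`(βᵢ/αᵢ)(1 - e^{-uαᵢ}) ≠ -1` if `αᵢ ≠ 0`, and `βᵢ u ≠ -1` if `αᵢ = 0`.
Then a bounded solution `x` of the DEPCA `x'(t) = A x(t) + B x(⌊t⌋) + f(t)`, with `f`
`ℤ`-almost automorphic, is almost automorphic if and only if its restriction to `ℤ`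
is discrete almost automorphic. -/
theorem reduction_method_aa {p : ℕ}
    (A B T : Matrix (Fin p) (Fin p) ℝ) (hT : IsUnit T)
    (hAtri : (T⁻¹ * A * T).BlockTriangular id)
    (hBtri : (T⁻¹ * B * T).BlockTriangular id)
    (heig : ∀ i : Fin p, ∀ u ∈ Set.Icc (0:ℝ) 1,
      (((T⁻¹ * A * T) i i ≠ 0 →
        ((T⁻¹ * B * T) i i / (T⁻¹ * A * T) i i) *
          (1 - Real.exp (-(u * (T⁻¹ * A * T) i i))) ≠ -1) ∧
       ((T⁻¹ * A * T) i i = 0 → (T⁻¹ * B * T) i i * u ≠ -1)))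
    (f : ℝ → Fin p → ℂ) (hf : ZAlmostAutomorphic p f)
    (x : ℝ → Fin p → ℂ) (hxb : ∃ C : ℝ, ∀ t : ℝ, ‖x t‖ ≤ C)
    (hx : IsDEPCASolution A B f x) :
    AlmostAutomorphic p x ↔ DiscreteAA p (fun n : ℤ => x (n : ℝ)) := by
  constructor
  · rintro ⟨-, -, hAA⟩ s
    obtain ⟨φ, G, hφ, h1, h2⟩ := hAA (fun n => (s n : ℝ))
    refine ⟨φ, fun k => G (k:ℝ), hφ, fun k => ?_, fun k => ?_⟩
    · refine Tendsto.congr (fun n => ?_) (h1 (k:ℝ))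
      norm_cast
    · refine Tendsto.congr (fun n => ?_) (h2 (k:ℝ))
      norm_cast
  · intro hD
    obtain ⟨⟨Cf, hfb⟩, hfcont, hfjump⟩ := hf.1
    obtain ⟨Cx, hxb'⟩ := hxb
    have hCx0 : 0 ≤ Cx := le_trans (norm_nonneg _) (hxb' 0)
    have hCf0 : 0 ≤ Cf := le_trans (norm_nonneg _) (hfb 0)
    have hfm : AEStronglyMeasurable f volume := BddPC.aesm ⟨⟨Cf, hfb⟩, hfcont, hfjump⟩
    have hloc := local_eq hx
    set L : ℝ := opC A * Cx + opC B * Cx + Cf with hLdef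
    have hL : 0 ≤ L := by
      have := opC_nonneg A; have := opC_nonneg B; positivity
    have hxl : ∀ a b : ℝ, ‖x a - x b‖ ≤ L * |a - b| := sol_lipschitz hx hxb' hfb
    refine ⟨⟨Cx, hxb'⟩, hx.1, ?_⟩
    intro s
    set m : ℕ → ℤ := fun n => ⌊s n⌋ with hmdef
    obtain ⟨φa, g, hφa, hfg, hgf⟩ := hf.2 m
    obtain ⟨φb, ξ, hφb, hxξ, hξx⟩ := hD (fun n => m (φa n))
    obtain ⟨rLim, hrLim, φc, hφc, hrconv⟩ :=
      (isCompact_Icc (a := (0:ℝ)) (b := 1)).tendsto_subseq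
        (x := fun n => Int.fract (s (φa (φb n))))
        (fun n => ⟨Int.fract_nonneg _, (Int.fract_lt_one _).le⟩)
    set φ : ℕ → ℕ := fun n => φa (φb (φc n)) with hφdef
    have hφ : StrictMono φ := hφa.comp (hφb.comp hφc)
    set M : ℕ → ℤ := fun n => m (φ n) with hMdef
    set r : ℕ → ℝ := fun n => Int.fract (s (φ n)) with hrdef
    have hr : Tendsto r atTop (𝓝 rLim) := by
      simpa [hrdef, hφdef, Function.comp_def] using hrconv
    have hsdecomp : ∀ n, s (φ n) = (M n : ℝ) + r n := by
      intro n
      simp only [hMdef, hrdef, hmdef]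
      rw [Int.floor_add_fract]
    -- transported convergences
    have hfg' : ∀ t, Tendsto (fun n => f (t + (M n : ℝ))) atTop (𝓝 (g t)) := by
      intro t
      have := (hfg t).comp ((hφb.comp hφc).tendsto_atTop)
      simpa [Function.comp_def] using this
    have hgf' : ∀ t, Tendsto (fun n => g (t - (M n : ℝ))) atTop (𝓝 (f t)) := by
      intro t
      have := (hgf t).comp ((hφb.comp hφc).tendsto_atTop)
      simpa [Function.comp_def] using this
    have hxξ' : ∀ k : ℤ, Tendsto (fun n => x ((k:ℝ) + (M n : ℝ))) atTop (𝓝 (ξ k)) := by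
      intro k
      have := (hxξ k).comp hφc.tendsto_atTop
      refine Tendsto.congr (fun n => ?_) this
      simp only [Function.comp]
      norm_cast
    have hξx' : ∀ k : ℤ, Tendsto (fun n => ξ (k - M n)) atTop (𝓝 (x (k:ℝ))) := by
      intro k
      have := (hξx k).comp hφc.tendsto_atTop
      simpa [Function.comp_def] using this
    -- bound and measurability of g
    have hgb : ∀ t, ‖g t‖ ≤ Cf := by
      intro t
      have : Tendsto (fun n => ‖f (t + (M n : ℝ))‖) atTop (𝓝 ‖g t‖) := (hfg' t).norm
      exact le_of_tendsto this (Eventually.of_forall fun n => hfb _)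
    have hgm : AEStronglyMeasurable g volume := by
      refine aestronglyMeasurable_of_tendsto_ae atTop
        (f := fun n => fun t => f (t + (M n : ℝ))) (fun n => (Nice.shift ⟨hfm, Cf, hfb⟩ _).1) ?_
      exact Eventually.of_forall fun t => hfg' t
    -- construct y
    obtain ⟨y, hyl, hyconv, hyback⟩ := construct_y A B f g x Cf Cx L hL hfb hgb hxb'
      hfm hgm hx.1 hxl hloc M ξ hfg' hgf' hxξ' hξx'
    refine ⟨φ, fun t => y (t + rLim), hφ, ?_, ?_⟩
    · -- forward convergence
      intro t
      have habs : Tendsto (fun n => |r n - rLim|) atTop (𝓝 0) := by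
        have := (hr.sub (tendsto_const_nhds (x := rLim))).abs
        simpa using this
      have hnorm2 : Tendsto (fun n => ‖x ((t + rLim) + (M n : ℝ)) - y (t + rLim)‖) atTop
          (𝓝 0) := tendsto_int_norm_zero (hyconv (t + rLim))
      have hnorm0 : Tendsto (fun n => ‖x (t + s (φ n)) - y (t + rLim)‖) atTop (𝓝 0) := by
        refine squeeze_zero (fun n => norm_nonneg _) (g := fun n =>
          L * |r n - rLim| + ‖x ((t + rLim) + (M n : ℝ)) - y (t + rLim)‖) (fun n => ?_) ?_
        · have harg : t + s (φ n) = (t + r n) + (M n : ℝ) := by rw [hsdecomp n]; ring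
          calc ‖x (t + s (φ n)) - y (t + rLim)‖
              ≤ ‖x ((t + r n) + (M n : ℝ)) - x ((t + rLim) + (M n : ℝ))‖
                + ‖x ((t + rLim) + (M n : ℝ)) - y (t + rLim)‖ := by
                rw [harg]
                exact norm_sub_le_norm_sub_add_norm_sub _ _ _
            _ ≤ L * |r n - rLim| + ‖x ((t + rLim) + (M n : ℝ)) - y (t + rLim)‖ := by
                have := hxl ((t + r n) + (M n : ℝ)) ((t + rLim) + (M n : ℝ))
                have harg2 : ((t + r n) + (M n : ℝ)) - ((t + rLim) + (M n : ℝ))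
                    = r n - rLim := by ring
                rw [harg2] at this
                linarith
        · have := (habs.const_mul L).add hnorm2
          simpa using this
      have := (tendsto_zero_iff_norm_tendsto_zero
        (f := fun n => x (t + s (φ n)) - y (t + rLim))).2 hnorm0
      have hfinal := this.add (tendsto_const_nhds (x := y (t + rLim)))
      simpa using hfinal
    · -- back convergence
      intro t
      have habs : Tendsto (fun n => |rLim - r n|) atTop (𝓝 0) := by
        have := ((tendsto_const_nhds (x := rLim)).sub hr).abs
        simpa using this
      have hnorm2 : Tendsto (fun n => ‖y (t - (M n : ℝ)) - x t‖) atTop (𝓝 0) :=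
        tendsto_int_norm_zero (hyback t)
      have hnorm0 : Tendsto (fun n => ‖y ((t - s (φ n)) + rLim) - x t‖) atTop (𝓝 0) := by
        refine squeeze_zero (fun n => norm_nonneg _) (g := fun n =>
          L * |rLim - r n| + ‖y (t - (M n : ℝ)) - x t‖) (fun n => ?_) ?_
        · have harg : (t - s (φ n)) + rLim = (t + rLim - r n) - (M n : ℝ) := by
            rw [hsdecomp n]; ring
          calc ‖y ((t - s (φ n)) + rLim) - x t‖
              ≤ ‖y ((t + rLim - r n) - (M n : ℝ)) - y (t - (M n : ℝ))‖
                + ‖y (t - (M n : ℝ)) - x t‖ := by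
                rw [harg]
                exact norm_sub_le_norm_sub_add_norm_sub _ _ _
            _ ≤ L * |rLim - r n| + ‖y (t - (M n : ℝ)) - x t‖ := by
                have := hyl ((t + rLim - r n) - (M n : ℝ)) (t - (M n : ℝ))
                have harg2 : ((t + rLim - r n) - (M n : ℝ)) - (t - (M n : ℝ))
                    = rLim - r n := by ring
                rw [harg2] at this
                linarith
        · have := (habs.const_mul L).add hnorm2
          simpa using this
      have := (tendsto_zero_iff_norm_tendsto_zero
        (f := fun n => y ((t - s (φ n)) + rLim) - x t)).2 hnorm0
      have hfinal := this.add (tendsto_const_nhds (x := x t))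
      simpa using hfinal
end

section
/- Let A, B ∈ M_{p×p}(ℝ) be simultaneously triangularizable with diagonal entries α₁,…,α_p and β₁,…,β_p of the triangularized matrices satisfying, for each i and every u ∈ [0,1]: if α_i ≠ 0 then (β_i/α_i)(1 − e^{−u α_i}) ≠ −1, and if α_i = 0 then β_i u ≠ −1. Let ω = p₀/q₀ ∈ ℚ with p₀, q₀ ∈ ℤ relatively prime, q₀ ≥ 1, and let f : ℝ → ℂ^p be Z-ω-periodic. Let x be a bounded solution of the DEPCA x'(t) = A x(t) + B x(⌊t⌋) + f(t), i.e. a bounded continuous function satisfying x(t) = x(s) + ∫_s^t (A x(u) + B x(⌊u⌋) + f(u)) du for all s ≤ t. Then x is q₀ω-periodic (i.e. x(t + p₀) = x(t) for all t ∈ ℝ) if and only if the sequence n ↦ x(n) is q₀ω-periodic (i.e. x(n + p₀) = x(n) for all n ∈ ℤ). In particular, if ω = p₀ ∈ ℤ, then x is ω-periodic if and only if n ↦ x(n) is ω-periodic. -/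
open MeasureTheory Filter Topology

/-- `RMulVec A` as a continuous `ℝ`-linear map. -/
noncomputable def RMulVecL {p : ℕ} (A : Matrix (Fin p) (Fin p) ℝ) :
    (Fin p → ℂ) →L[ℝ] (Fin p → ℂ) :=
  LinearMap.toContinuousLinearMap
    { toFun := RMulVec A
      map_add' := by
        intro a b; funext i; simp [RMulVec, mul_add, Finset.sum_add_distrib]
      map_smul' := by
        intro c a; funext i
        simp [RMulVec, Finset.smul_sum, Complex.real_smul]
        ring_nf
        congr 1; funext j; ring }

lemma RMulVecL_apply {p : ℕ} (A : Matrix (Fin p) (Fin p) ℝ) (x : Fin p → ℂ) :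
    RMulVecL A x = RMulVec A x := rfl

lemma intervalIntegrable_of_bdd {p : ℕ} {g : ℝ → Fin p → ℂ}
    (hm : AEStronglyMeasurable g volume) {C : ℝ} (hC : ∀ t, ‖g t‖ ≤ C) (a b : ℝ) :
    IntervalIntegrable g volume a b := by
  rw [intervalIntegrable_iff]
  exact (integrableOn_const measure_Ioc_lt_top.ne).mono'
    hm.restrict (ae_of_all _ hC)

/-- Periodic case of the reduction method: under the simultaneous triangularization
and eigenvalue conditions on `A, B`, if `ω = p₀/q₀ ∈ ℚ` (with `p₀, q₀` coprime,
`q₀ ≥ 1`) and `f` is `ℤ`-`ω`-periodic (bounded, piecewise continuous and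
`ω`-periodic), then a bounded solution `x` of the DEPCA
`x'(t) = A x(t) + B x(⌊t⌋) + f(t)` is `q₀ω`-periodic (i.e. `p₀`-periodic) if and
only if the sequence `n ↦ x(n)` is `q₀ω`-periodic. -/
theorem depca_periodic_iff_discrete_periodic {p : ℕ}
    (A B T : Matrix (Fin p) (Fin p) ℝ) (hT : IsUnit T)
    (hAtri : (T⁻¹ * A * T).BlockTriangular id)
    (hBtri : (T⁻¹ * B * T).BlockTriangular id)
    (heig : ∀ i : Fin p, ∀ u ∈ Set.Icc (0:ℝ) 1,
      (((T⁻¹ * A * T) i i ≠ 0 →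
        ((T⁻¹ * B * T) i i / (T⁻¹ * A * T) i i) *
          (1 - Real.exp (-(u * (T⁻¹ * A * T) i i))) ≠ -1) ∧
       ((T⁻¹ * A * T) i i = 0 → (T⁻¹ * B * T) i i * u ≠ -1)))
    (p₀ q₀ : ℤ) (hq₀ : 1 ≤ q₀) (hcop : Int.gcd p₀ q₀ = 1)
    (ω : ℝ) (hω : ω = (p₀ : ℝ) / (q₀ : ℝ))
    (f : ℝ → Fin p → ℂ) (hfpc : BddPC p f) (hfper : ∀ t : ℝ, f (t + ω) = f t)
    (x : ℝ → Fin p → ℂ) (hxb : ∃ C : ℝ, ∀ t : ℝ, ‖x t‖ ≤ C)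
    (hx : IsDEPCASolution A B f x) :
    (∀ t : ℝ, x (t + (p₀ : ℝ)) = x t) ↔
      (∀ n : ℤ, x ((n : ℝ) + (p₀ : ℝ)) = x (n : ℝ)) := by
  constructor
  · intro h n; exact h n
  intro hd
  obtain ⟨hxc, hxint⟩ := hx
  obtain ⟨C, hC⟩ := hxb
  -- f is p₀-periodic
  have hq0 : (q₀ : ℝ) ≠ 0 := by
    have : (0:ℤ) < q₀ := by omega
    exact_mod_cast this.ne'
  have hfperN : ∀ (m : ℕ) (t : ℝ), f (t + m * ω) = f t := by
    intro m
    induction m with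
    | zero => simp
    | succ k ih =>
      intro t
      have h1 : t + ((k+1 : ℕ) : ℝ) * ω = (t + k * ω) + ω := by push_cast; ring
      rw [h1, hfper, ih]
  have hfp : ∀ t : ℝ, f (t + (p₀ : ℝ)) = f t := by
    intro t
    have h1 : (p₀ : ℝ) = (q₀.toNat : ℕ) * ω := by
      rw [hω]
      have : ((q₀.toNat : ℕ) : ℝ) = (q₀ : ℝ) := by
        norm_cast; omega
      rw [this]; field_simp
    rw [h1, hfperN]
  -- the difference function z
  set z : ℝ → Fin p → ℂ := fun t => x (t + (p₀ : ℝ)) - x t with hz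
  have hzc : Continuous z := (hxc.comp (continuous_id.add continuous_const)).sub hxc
  have hzint : ∀ n : ℤ, z ((n : ℝ)) = 0 := fun n => sub_eq_zero.mpr (hd n)
  -- integrand
  set F : ℝ → Fin p → ℂ :=
    fun u => RMulVec A (x u) + RMulVec B (x ((⌊u⌋ : ℤ) : ℝ)) + f u with hF
  set G : ℝ → Fin p → ℂ := fun u => RMulVecL A (z u) with hG
  have hGc : Continuous G := (RMulVecL A).continuous.comp hzc
  -- integrability of F
  have hfloorm : AEStronglyMeasurable (fun u : ℝ => x ((⌊u⌋ : ℤ) : ℝ)) volume :=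
    ((measurable_from_top (f := fun n : ℤ => x ((n:ℤ):ℝ))).comp
      Int.measurable_floor).aestronglyMeasurable
  have hfm : AEStronglyMeasurable f volume := by
    obtain ⟨-, hfcont, -⟩ := hfpc
    set S : Set ℝ := {t : ℝ | ∀ n : ℤ, t ≠ (n : ℝ)} with hS
    have hScompl : Sᶜ = Set.range (fun n : ℤ => (n : ℝ)) := by
      ext t; simp [hS, Set.mem_compl_iff, eq_comm]
    have hcnt : Sᶜ.Countable := by rw [hScompl]; exact Set.countable_range _
    have hSm : MeasurableSet S := by
      rw [← compl_compl S]; exact hcnt.measurableSet.compl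
    have hS0 : volume Sᶜ = 0 := hcnt.measure_zero _
    have hae : ∀ᵐ t : ℝ, t ∈ S := by
      rw [ae_iff]; exact hS0
    have := hfcont.aestronglyMeasurable (μ := volume) hSm
    rwa [Measure.restrict_eq_self_of_ae_mem hae] at this
  have hFint : ∀ s t : ℝ, IntervalIntegrable F volume s t := by
    intro s t
    obtain ⟨Cf, hCf⟩ := hfpc.1
    refine IntervalIntegrable.add (IntervalIntegrable.add ?_ ?_) ?_
    · exact (((RMulVecL A).continuous.comp hxc).intervalIntegrable s t)
    · refine intervalIntegrable_of_bdd
        (((RMulVecL B).continuous.measurable).comp_aemeasurable'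
          ?_ |>.aestronglyMeasurable) (C := ‖RMulVecL B‖ * C) ?_ s t
      · exact hfloorm.aemeasurable
      · intro u
        calc ‖RMulVecL B (x ((⌊u⌋:ℤ):ℝ))‖ ≤ ‖RMulVecL B‖ * ‖x ((⌊u⌋:ℤ):ℝ)‖ :=
              (RMulVecL B).le_opNorm _
          _ ≤ ‖RMulVecL B‖ * C := by
              exact mul_le_mul_of_nonneg_left (hC _) (norm_nonneg _)
    · exact intervalIntegrable_of_bdd hfm hCf s t
  -- key identity
  have key : ∀ s t : ℝ, s ≤ t → z t = z s + ∫ u in s..t, G u := by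
    intro s t hst
    have e1 := hxint (s + (p₀:ℝ)) (t + (p₀:ℝ)) (by linarith)
    have e2 : (∫ u in s + (p₀:ℝ)..t + (p₀:ℝ), F u) = ∫ u in s..t, F (u + (p₀:ℝ)) :=
      (intervalIntegral.integral_comp_add_right F (p₀:ℝ)).symm
    have e3 : ∀ u : ℝ, F (u + (p₀:ℝ)) = F u + G u := by
      intro u
      have hfloor : ((⌊u + (p₀:ℝ)⌋ : ℤ) : ℝ) = ((⌊u⌋ : ℤ) : ℝ) + (p₀:ℝ) := by
        rw [Int.floor_add_intCast]; push_cast; ring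
      have hxB : x (((⌊u + (p₀:ℝ)⌋ : ℤ) : ℝ)) = x (((⌊u⌋ : ℤ) : ℝ)) := by
        rw [hfloor]; exact hd ⌊u⌋
      have hA : RMulVec A (x (u + (p₀:ℝ))) = RMulVec A (x u) + RMulVecL A (z u) := by
        have h' : RMulVecL A (z u) = RMulVecL A (x (u + (p₀:ℝ))) - RMulVecL A (x u) :=
          map_sub _ _ _
        rw [h', RMulVecL_apply, RMulVecL_apply]
        abel
      simp only [hF, hG, hxB, hfp u, hA]
      abel
    have e4 : (∫ u in s..t, F (u + (p₀:ℝ))) =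
        (∫ u in s..t, F u) + ∫ u in s..t, G u := by
      rw [intervalIntegral.integral_congr (g := fun u => F u + G u)
        (fun u _ => e3 u)]
      exact intervalIntegral.integral_add (hFint s t) (hGc.intervalIntegrable s t)
    have e5 := hxint s t hst
    have : x (t + (p₀:ℝ)) = x (s + (p₀:ℝ)) + ((∫ u in s..t, F u) + ∫ u in s..t, G u) := by
      rw [e1, e2, e4]
    simp only [hz]
    rw [this, e5]
    abel
  -- z as an integral from 0
  have hz0 : z 0 = 0 := by
    have := hzint 0; simpa using this
  have hzrep : ∀ t : ℝ, z t = ∫ u in (0:ℝ)..t, G u := by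
    intro t
    rcases le_total 0 t with h | h
    · rw [key 0 t h, hz0, zero_add]
    · have := key t 0 h
      rw [hz0] at this
      have h2 : z t = -∫ u in t..(0:ℝ), G u :=
        eq_neg_of_add_eq_zero_left this.symm
      rw [h2, ← intervalIntegral.integral_symm]
  have hzd : ∀ t : ℝ, HasDerivAt z (RMulVecL A (z t)) t := by
    intro t
    have h1 : HasDerivAt (fun t => ∫ u in (0:ℝ)..t, G u) (G t) t :=
      (hGc.integral_hasStrictDerivAt 0 t).hasDerivAt
    have heq : z =ᶠ[nhds t] fun s => ∫ u in (0:ℝ)..s, G u :=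
      Filter.Eventually.of_forall hzrep
    exact heq.hasDerivAt_iff.mpr h1
  -- ODE uniqueness
  intro t
  have hmem : t ∈ Set.Icc (-(|t|+1)) (|t|+1) := by
    constructor
    · have := neg_abs_le t; linarith
    · have := le_abs_self t; linarith
  have h0 : (0:ℝ) ∈ Set.Ioo (-(|t|+1)) (|t|+1) := by
    constructor
    · have := abs_nonneg t; linarith
    · have := abs_nonneg t; linarith
  have huniq : Set.EqOn z (fun _ => (0 : Fin p → ℂ)) (Set.Icc (-(|t|+1)) (|t|+1)) := by
    apply ODE_solution_unique_of_mem_Icc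
      (v := fun _ w => RMulVecL A w) (s := fun _ => Set.univ)
      (hv := fun _ _ => (RMulVecL A).lipschitz.lipschitzOnWith) h0
      hzc.continuousOn (fun u _ => hzd u) (fun _ _ => trivial)
      continuousOn_const ?_ (fun _ _ => trivial) hz0
    intro u _
    simpa using hasDerivAt_const u (0 : Fin p → ℂ)
  have := huniq hmem
  exact sub_eq_zero.mp this
end
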